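/- arXiv:1101.3596 — 4 statements merged into one kernel-verified Lean document; each statement's English description precedes it below -/
import Mathlib

section
/- Let n ∈ ℕ, j ≤ n, and suppose A ⊆ ℝⁿ satisfies either A ∈ R(w,ρ0,fine;j) or A ∈ R(s,β,γ;j) for some β ∈ {∅, ρ, ρ0} and γ ∈ Δ := {fine} ∪ (0,1). Then there exist j-dimensional linear subspaces L_k ⊆ ℝⁿ and Lipschitz functions g_k : L_k → L_k^⊥ (k ∈ ℕ) such that A ⊆ ⋃_{k∈ℕ} graph(g_k); i.e. A is covered by countably many Lipschitz graphs over j-dimensional planes. -/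
open Metric Set MeasureTheory ENNReal NNReal

attribute [local instance] Classical.propDecidable

noncomputable section

namespace ReifenbergPaper

/-- The closed `r`-neighbourhood `E^r = {x : dist (x, E) ≤ r}` of `E ⊆ ℝⁿ`. -/
def nbhd {n : ℕ} (E : Set (EuclideanSpace ℝ (Fin n))) (r : ℝ) :
    Set (EuclideanSpace ℝ (Fin n)) :=
  {x | Metric.infDist x E ≤ r}

/-- The affine plane through `x` with direction the linear subspace `W`. -/
def affPlane {n : ℕ} (x : EuclideanSpace ℝ (Fin n))
    (W : Submodule ℝ (EuclideanSpace ℝ (Fin n))) : Set (EuclideanSpace ℝ (Fin n)) :=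
  {z | z - x ∈ W}

/-- `A ∈ R(w,∅,δ;j)`. -/
def RwEmpty {n : ℕ} (j : ℕ) (δ : ℝ) (A : Set (EuclideanSpace ℝ (Fin n))) : Prop :=
  ∀ y ∈ A, ∃ ρy > (0:ℝ), ∀ ρ ∈ Set.Ioc (0:ℝ) ρy,
    ∃ W : Submodule ℝ (EuclideanSpace ℝ (Fin n)), Module.finrank ℝ W = j ∧
      Metric.closedBall y ρ ∩ A ⊆ nbhd (affPlane y W) (δ * ρ)

/-- `A ∈ R(w,ρ,δ;j)`. -/
def RwRho {n : ℕ} (j : ℕ) (δ : ℝ) (A : Set (EuclideanSpace ℝ (Fin n))) : Prop :=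
  ∀ y ∈ A, ∃ ρy > (0:ℝ), ∀ x ∈ Metric.closedBall y ρy ∩ A, ∀ ρ ∈ Set.Ioc (0:ℝ) ρy,
    ∃ W : Submodule ℝ (EuclideanSpace ℝ (Fin n)), Module.finrank ℝ W = j ∧
      Metric.closedBall x ρ ∩ A ⊆ nbhd (affPlane x W) (δ * ρ)

/-- `A ∈ R(w,ρ0,δ;j)`. -/
def RwRho0 {n : ℕ} (j : ℕ) (δ : ℝ) (A : Set (EuclideanSpace ℝ (Fin n))) : Prop :=
  ∃ ρ0 > (0:ℝ), (∃ c, A ⊆ Metric.closedBall c ρ0) ∧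
    ∀ y ∈ A, ∀ ρ ∈ Set.Ioc (0:ℝ) ρ0,
      ∃ W : Submodule ℝ (EuclideanSpace ℝ (Fin n)), Module.finrank ℝ W = j ∧
        Metric.closedBall y ρ ∩ A ⊆ nbhd (affPlane y W) (δ * ρ)

/-- `A ∈ R(s,∅,δ;j)`. -/
def RsEmpty {n : ℕ} (j : ℕ) (δ : ℝ) (A : Set (EuclideanSpace ℝ (Fin n))) : Prop :=
  ∀ y ∈ A, ∃ ρy > (0:ℝ), ∃ W : Submodule ℝ (EuclideanSpace ℝ (Fin n)),
    Module.finrank ℝ W = j ∧ ∀ ρ ∈ Set.Ioc (0:ℝ) ρy,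
      Metric.closedBall y ρ ∩ A ⊆ nbhd (affPlane y W) (δ * ρ)

/-- `A ∈ R(s,ρ,δ;j)`. -/
def RsRho {n : ℕ} (j : ℕ) (δ : ℝ) (A : Set (EuclideanSpace ℝ (Fin n))) : Prop :=
  ∀ y ∈ A, ∃ ρy > (0:ℝ), ∃ W : Submodule ℝ (EuclideanSpace ℝ (Fin n)),
    Module.finrank ℝ W = j ∧
    ∀ x ∈ Metric.closedBall y ρy ∩ A, ∀ ρ ∈ Set.Ioc (0:ℝ) ρy,
      Metric.closedBall x ρ ∩ A ⊆ nbhd (affPlane x W) (δ * ρ)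

/-- `A ∈ R(s,ρ0,δ;j)`. -/
def RsRho0 {n : ℕ} (j : ℕ) (δ : ℝ) (A : Set (EuclideanSpace ℝ (Fin n))) : Prop :=
  ∃ ρ0 > (0:ℝ), (∃ c, A ⊆ Metric.closedBall c ρ0) ∧
    ∃ W : Submodule ℝ (EuclideanSpace ℝ (Fin n)), Module.finrank ℝ W = j ∧
      ∀ x ∈ A, ∀ ρ ∈ Set.Ioc (0:ℝ) ρ0,
        Metric.closedBall x ρ ∩ A ⊆ nbhd (affPlane x W) (δ * ρ)

/-- The weak/strong parameter `α`. -/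
inductive Alpha | w | s

/-- The uniformity parameter `β ∈ {∅, ρ, ρ0}`. -/
inductive Beta | none | rho | rho0

/-- `A ∈ R(α,β,δ;j)` for a fixed approximation constant `δ`. -/
def RDelta {n : ℕ} (α : Alpha) (β : Beta) (j : ℕ) (δ : ℝ)
    (A : Set (EuclideanSpace ℝ (Fin n))) : Prop :=
  match α, β with
  | .w, .none => RwEmpty j δ A
  | .w, .rho  => RwRho j δ A
  | .w, .rho0 => RwRho0 j δ A
  | .s, .none => RsEmpty j δ A
  | .s, .rho  => RsRho j δ A
  | .s, .rho0 => RsRho0 j δ A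

/-- `A ∈ R(α,β,γ;j)` where `γ : Option ℝ`, with `Option.none` denoting the fine
property (`δ`-approximation for every `δ ∈ (0,1)`) and `Option.some δ` denoting the
`δ`-approximation property. -/
def RGamma {n : ℕ} (α : Alpha) (β : Beta) (j : ℕ) (γ : Option ℝ)
    (A : Set (EuclideanSpace ℝ (Fin n))) : Prop :=
  match γ with
  | Option.none => ∀ δ ∈ Set.Ioo (0:ℝ) 1, RDelta α β j δ A
  | Option.some δ => RDelta α β j δ A

/-- `γ ∈ Δ := {fine} ∪ (0,1)`. -/
def memDelta (γ : Option ℝ) : Prop :=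
  γ = Option.none ∨ ∃ d ∈ Set.Ioo (0:ℝ) 1, γ = Option.some d

/-- The graph `{x + g x : x ∈ W}` of a function `g : W → Wᗮ`. -/
def lipGraph {n : ℕ} (W : Submodule ℝ (EuclideanSpace ℝ (Fin n)))
    (g : W → Wᗮ) : Set (EuclideanSpace ℝ (Fin n)) :=
  {p | ∃ x : W, p = (x : EuclideanSpace ℝ (Fin n)) + (g x : EuclideanSpace ℝ (Fin n))}

/-- `N_ε(E)`: the smallest number of sets of diameter at most `ε` needed to cover `E`,
as an element of `ℝ≥0∞` (`⊤` if no finite cover exists). -/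
def coverNum {n : ℕ} (E : Set (EuclideanSpace ℝ (Fin n))) (ε : ℝ) : ℝ≥0∞ :=
  ⨅ (s : Finset (Set (EuclideanSpace ℝ (Fin n)))) (_ : E ⊆ ⋃ t ∈ s, t)
    (_ : ∀ t ∈ s, Metric.diam t ≤ ε), (s.card : ℝ≥0∞)

/-- Upper Minkowski (box-counting) dimension
`limsup_{ε → 0⁺} log N_ε(E) / (- log ε)`, with the convention that the empty set
has dimension `0`. -/
def upperMinkDim {n : ℕ} (E : Set (EuclideanSpace ℝ (Fin n))) : ℝ :=
  if E = ∅ then 0 else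
    Filter.limsup (fun ε : ℝ => Real.log (coverNum E ε).toReal / (-Real.log ε))
      (nhdsWithin 0 (Set.Ioi 0))

/-- Lower Minkowski (box-counting) dimension
`liminf_{ε → 0⁺} log N_ε(E) / (- log ε)`, with the convention that the empty set
has dimension `0`. -/
def lowerMinkDim {n : ℕ} (E : Set (EuclideanSpace ℝ (Fin n))) : ℝ :=
  if E = ∅ then 0 else
    Filter.liminf (fun ε : ℝ => Real.log (coverNum E ε).toReal / (-Real.log ε))
      (nhdsWithin 0 (Set.Ioi 0))

/-- Packing dimension:
`dim_P A = inf { sup_i dim̄_M A_i : A = ⋃ i, A_i, each A_i bounded }`. -/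
def packDim {n : ℕ} (A : Set (EuclideanSpace ℝ (Fin n))) : ℝ :=
  sInf {d : ℝ | ∃ F : ℕ → Set (EuclideanSpace ℝ (Fin n)),
    A = ⋃ i, F i ∧ (∀ i, Bornology.IsBounded (F i)) ∧ ∀ i, upperMinkDim (F i) ≤ d}

/-- `D` is an `η`-packing of `E`: a countable collection of pairwise disjoint closed
balls centred at points of `E` with (positive) radii at most `η`, coded as a set of
(centre, radius) pairs. -/
def IsPacking {n : ℕ} (η : ℝ) (E : Set (EuclideanSpace ℝ (Fin n)))
    (D : Set (EuclideanSpace ℝ (Fin n) × ℝ)) : Prop :=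
  D.Countable ∧ (∀ p ∈ D, p.1 ∈ E ∧ 0 < p.2 ∧ p.2 ≤ η) ∧
    D.Pairwise fun p q => Disjoint (Metric.closedBall p.1 p.2) (Metric.closedBall q.1 q.2)

/-- The packing premeasure `P^s_η(E) = sup { Σ_i (diam B_i)^s }` over `η`-packings. -/
def packPre {n : ℕ} (s : ℕ) (η : ℝ) (E : Set (EuclideanSpace ℝ (Fin n))) : ℝ≥0∞ :=
  ⨆ (D : Set (EuclideanSpace ℝ (Fin n) × ℝ)) (_ : IsPacking η E D),
    ∑' p : D, (ENNReal.ofReal (Metric.diam (Metric.closedBall p.1.1 p.1.2))) ^ s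

/-- `P^s_0(E) = lim_{η ↓ 0} P^s_η(E) = inf_{η > 0} P^s_η(E)`. -/
def packPre0 {n : ℕ} (s : ℕ) (E : Set (EuclideanSpace ℝ (Fin n))) : ℝ≥0∞ :=
  ⨅ (η : ℝ) (_ : 0 < η), packPre s η E

/-- The `s`-dimensional packing measure
`P^s(E) = inf { Σ_i P^s_0(E_i) : E ⊆ ⋃ i, E_i }`. -/
def packMeasure {n : ℕ} (s : ℕ) (E : Set (EuclideanSpace ℝ (Fin n))) : ℝ≥0∞ :=
  ⨅ (F : ℕ → Set (EuclideanSpace ℝ (Fin n))) (_ : E ⊆ ⋃ i, F i), ∑' i, packPre0 s (F i)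

/-- `A` is `(μ, j)`-rectifiable: `A ⊆ M₀ ∪ ⋃ i, f i '' ℝ^j` with `μ M₀ = 0` and each
`f i` Lipschitz. -/
def Rectifiable {n : ℕ} (μ : Set (EuclideanSpace ℝ (Fin n)) → ℝ≥0∞) (j : ℕ)
    (A : Set (EuclideanSpace ℝ (Fin n))) : Prop :=
  ∃ (M₀ : Set (EuclideanSpace ℝ (Fin n)))
    (f : ℕ → EuclideanSpace ℝ (Fin j) → EuclideanSpace ℝ (Fin n)),
    μ M₀ = 0 ∧ (∀ i, ∃ K : ℝ≥0, LipschitzWith K (f i)) ∧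
      A ⊆ M₀ ∪ ⋃ i, Set.range (f i)

/-- `A` has weakly locally finite `μ` measure. -/
def WeaklyLocFinite {n : ℕ} (μ : Set (EuclideanSpace ℝ (Fin n)) → ℝ≥0∞)
    (A : Set (EuclideanSpace ℝ (Fin n))) : Prop :=
  ∀ y ∈ A, ∃ ρ > (0:ℝ), μ (Metric.closedBall y ρ ∩ A) < ⊤

/-- `A` has strongly locally finite `μ` measure. -/
def StronglyLocFinite {n : ℕ} (μ : Set (EuclideanSpace ℝ (Fin n)) → ℝ≥0∞)
    (A : Set (EuclideanSpace ℝ (Fin n))) : Prop :=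
  ∀ K : Set (EuclideanSpace ℝ (Fin n)), IsCompact K → μ (K ∩ A) < ⊤

/-- `A` satisfies the two-sided `wρ j` property with respect to `ε`. -/
def TwoSidedWRho {n : ℕ} (j : ℕ) (ε : ℝ) (A : Set (EuclideanSpace ℝ (Fin n))) : Prop :=
  ∀ y ∈ A, ∃ ρy > (0:ℝ), ∀ x ∈ A ∩ Metric.closedBall y ρy, ∀ ρ ∈ Set.Ioc (0:ℝ) ρy,
    ∃ (x0 : EuclideanSpace ℝ (Fin n)) (W : Submodule ℝ (EuclideanSpace ℝ (Fin n))),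
      Module.finrank ℝ W = j ∧
      Metric.hausdorffDist (A ∩ Metric.closedBall x ρ)
        (affPlane x0 W ∩ Metric.closedBall x ρ) < ε * ρ

/-- The set `N_j = ⋃_{i ≥ 1} {i⁻¹} × [0,1]^j ⊆ ℝ^{j+1}`. -/
def NSet (j : ℕ) : Set (EuclideanSpace ℝ (Fin (j+1))) :=
  {x | ∃ i : ℕ, 1 ≤ i ∧ x 0 = ((i : ℝ))⁻¹ ∧ ∀ k : Fin (j+1), k ≠ 0 → x k ∈ Set.Icc (0:ℝ) 1}



/-! ### Auxiliary machinery for the proof of `lipschitz_graph_cover` -/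

section LipschitzCoverAux

open Module Submodule Filter

variable {n : ℕ}

/-- The projection onto the orthogonal complement of `W`, as a map `ℝⁿ → ℝⁿ`. -/
noncomputable def projQ (W : Submodule ℝ (EuclideanSpace ℝ (Fin n))) :
    EuclideanSpace ℝ (Fin n) →L[ℝ] EuclideanSpace ℝ (Fin n) :=
  (Wᗮ).subtypeL.comp (orthogonalProjection Wᗮ)

lemma projQ_eq_zero {W : Submodule ℝ (EuclideanSpace ℝ (Fin n))}
    {w : EuclideanSpace ℝ (Fin n)} (hw : w ∈ W) : projQ W w = 0 := by
  simp only [projQ, ContinuousLinearMap.comp_apply]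
  rw [orthogonalProjection_mem_subspace_orthogonalComplement_eq_zero
    (Submodule.le_orthogonal_orthogonal W hw)]
  simp

lemma norm_projQ_le (W : Submodule ℝ (EuclideanSpace ℝ (Fin n)))
    (v : EuclideanSpace ℝ (Fin n)) : ‖projQ W v‖ ≤ ‖v‖ := by
  have h := (orthogonalProjection Wᗮ).le_opNorm v
  calc ‖projQ W v‖ = ‖orthogonalProjection Wᗮ v‖ := rfl
    _ ≤ ‖orthogonalProjection Wᗮ‖ * ‖v‖ := h
    _ ≤ 1 * ‖v‖ := by
        have := orthogonalProjection_norm_le (K := Wᗮ) (𝕜 := ℝ)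
        nlinarith [norm_nonneg v]
    _ = ‖v‖ := one_mul _

lemma isClosed_affPlane (x : EuclideanSpace ℝ (Fin n))
    (W : Submodule ℝ (EuclideanSpace ℝ (Fin n))) : IsClosed (affPlane x W) := by
  have h : affPlane x W = (fun z => z - x) ⁻¹' (W : Set (EuclideanSpace ℝ (Fin n))) := rfl
  rw [h]
  exact (Submodule.closed_of_finiteDimensional W).preimage (continuous_id.sub continuous_const)

lemma mem_affPlane_self (x : EuclideanSpace ℝ (Fin n))
    (W : Submodule ℝ (EuclideanSpace ℝ (Fin n))) : x ∈ affPlane x W := by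
  simp [affPlane]

/-- Key geometric estimate: a point in the `r`-neighbourhood of the affine plane
`x + W` has orthogonal part (relative to `x` and `W`) of norm at most `r`. -/
lemma norm_projQ_sub_le {x y : EuclideanSpace ℝ (Fin n)}
    {W : Submodule ℝ (EuclideanSpace ℝ (Fin n))} {r : ℝ}
    (h : y ∈ nbhd (affPlane x W) r) : ‖projQ W (y - x)‖ ≤ r := by
  obtain ⟨z, hz, hdz⟩ := (isClosed_affPlane x W).exists_infDist_eq_dist
    ⟨x, mem_affPlane_self x W⟩ y
  have hyz : dist y z ≤ r := by rw [← hdz]; exact h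
  have hsplit : y - x = (y - z) + (z - x) := by abel
  rw [hsplit, map_add, projQ_eq_zero hz, add_zero]
  calc ‖projQ W (y - z)‖ ≤ ‖y - z‖ := norm_projQ_le _ _
    _ ≤ r := by rw [← dist_eq_norm]; exact hyz

lemma ext_aux : ∀ (d : ℕ) (j : ℕ) (V : Submodule ℝ (EuclideanSpace ℝ (Fin n))),
    finrank ℝ V + d = j → j ≤ n →
    ∃ W : Submodule ℝ (EuclideanSpace ℝ (Fin n)), V ≤ W ∧ finrank ℝ W = j := by
  intro d
  induction d with
  | zero => exact fun j V h _ => ⟨V, le_rfl, by simpa using h⟩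
  | succ d ih =>
    intro j V h hj
    have hE : finrank ℝ (EuclideanSpace ℝ (Fin n)) = n := finrank_euclideanSpace_fin
    have hV : finrank ℝ V < finrank ℝ (EuclideanSpace ℝ (Fin n)) := by omega
    have hVne : V ≠ ⊤ := by
      intro hT
      rw [hT, finrank_top] at hV
      omega
    obtain ⟨v, hv⟩ : ∃ v, v ∉ V := by
      by_contra h'
      push_neg at h'
      exact hVne (eq_top_iff.2 fun x _ => h' x)
    have hv0 : v ≠ 0 := fun h0 => hv (h0 ▸ V.zero_mem)
    have hdisj : Disjoint V (ℝ ∙ v) := (Submodule.disjoint_span_singleton' hv0).2 hv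
    have hfr : finrank ℝ (V ⊔ (ℝ ∙ v) : Submodule ℝ (EuclideanSpace ℝ (Fin n)))
        = finrank ℝ V + 1 := by
      have := Submodule.finrank_sup_add_finrank_inf_eq V (ℝ ∙ v)
      rw [hdisj.eq_bot, finrank_bot, finrank_span_singleton hv0] at this
      omega
    obtain ⟨W, hle, hW⟩ := ih j (V ⊔ (ℝ ∙ v)) (by omega) hj
    exact ⟨W, le_trans le_sup_left hle, hW⟩

lemma exists_superset_finrank {j : ℕ} (hj : j ≤ n)
    (V : Submodule ℝ (EuclideanSpace ℝ (Fin n))) (hV : finrank ℝ V ≤ j) :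
    ∃ W : Submodule ℝ (EuclideanSpace ℝ (Fin n)), V ≤ W ∧ finrank ℝ W = j :=
  ext_aux (j - finrank ℝ V) j V (by omega) hj

/-- A set satisfying a two-point cone condition over the plane `V` is contained in a
Lipschitz graph over `V`. -/
lemma graph_piece (V : Submodule ℝ (EuclideanSpace ℝ (Fin n)))
    (S : Set (EuclideanSpace ℝ (Fin n))) (K₀ : ℝ)
    (h : ∀ x ∈ S, ∀ y ∈ S, ‖projQ V (x - y)‖
      ≤ K₀ * ‖((orthogonalProjection V (x - y)) : EuclideanSpace ℝ (Fin n))‖) :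
    ∃ g : V → Vᗮ, (∃ K : ℝ≥0, LipschitzWith K g) ∧ S ⊆ lipGraph V g := by
  classical
  set P : EuclideanSpace ℝ (Fin n) →L[ℝ] V := orthogonalProjection V with hP
  have key : ∀ x ∈ S, ∀ y ∈ S, P x = P y → x = y := by
    intro x hx y hy hPxy
    have hP0 : P (x - y) = 0 := by rw [map_sub, hPxy, sub_self]
    have h1 := h x hx y hy
    rw [hP0] at h1
    simp only [Submodule.coe_zero, norm_zero, mul_zero] at h1
    have hQ0 : projQ V (x - y) = 0 :=
      norm_eq_zero.1 (le_antisymm h1 (norm_nonneg _))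
    have hdec : ((orthogonalProjection V (x - y)) : EuclideanSpace ℝ (Fin n))
        + ((orthogonalProjection Vᗮ (x - y)) : EuclideanSpace ℝ (Fin n)) = x - y :=
      Submodule.starProjection_add_starProjection_orthogonal (K := V) (x - y)
    have hxy : x - y = 0 := by
      rw [← hdec, hP0]
      have h2 : ((orthogonalProjection Vᗮ (x - y)) : EuclideanSpace ℝ (Fin n))
          = projQ V (x - y) := rfl
      rw [h2, hQ0]
      simp
    exact sub_eq_zero.1 hxy
  have hpredmem : ∀ x ∈ S, ∃ x', x' ∈ S ∧ P x' = P x := fun x hx => ⟨x, hx, rfl⟩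
  set F : V → Vᗮ := fun z =>
    if hz : ∃ x', x' ∈ S ∧ P x' = z then orthogonalProjection Vᗮ hz.choose else 0 with hF
  have hFPx : ∀ x ∈ S, F (P x) = orthogonalProjection Vᗮ x := by
    intro x hx
    have hz : ∃ x', x' ∈ S ∧ P x' = P x := hpredmem x hx
    have hch : hz.choose ∈ S ∧ P hz.choose = P x := hz.choose_spec
    have hcx : hz.choose = x := key _ hch.1 _ hx hch.2
    simp only [hF, dif_pos hz, hcx]
  set K₀' : ℝ≥0 := Real.toNNReal K₀ with hK₀'
  have hK₀le : K₀ ≤ (K₀' : ℝ) := Real.le_coe_toNNReal K₀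
  have hFlip : ∀ x ∈ S, ∀ y ∈ S,
      ‖F (P x) - F (P y)‖ ≤ (K₀' : ℝ) * ‖P x - P y‖ := by
    intro x hx y hy
    rw [hFPx x hx, hFPx y hy]
    have he : ‖(orthogonalProjection Vᗮ x - orthogonalProjection Vᗮ y : Vᗮ)‖
        = ‖projQ V (x - y)‖ := by
      rw [Submodule.coe_norm]
      congr 1
      simp [projQ, map_sub]
    rw [he]
    calc ‖projQ V (x - y)‖
        ≤ K₀ * ‖((P (x - y)) : EuclideanSpace ℝ (Fin n))‖ := h x hx y hy
      _ ≤ (K₀' : ℝ) * ‖((P (x - y)) : EuclideanSpace ℝ (Fin n))‖ :=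
          mul_le_mul_of_nonneg_right hK₀le (norm_nonneg _)
      _ = (K₀' : ℝ) * ‖P x - P y‖ := by rw [map_sub, ← Submodule.coe_norm]
  set m := finrank ℝ (Vᗮ) with hm
  set B := stdOrthonormalBasis ℝ (Vᗮ) with hB
  set G : Set V := P '' S with hG
  have hfi : ∀ i : Fin m, LipschitzOnWith K₀' (fun z => (inner ℝ (B i) (F z) : ℝ)) G := by
    intro i
    apply LipschitzOnWith.of_dist_le_mul
    rintro z ⟨x, hx, rfl⟩ z' ⟨y, hy, rfl⟩
    rw [Real.dist_eq, ← inner_sub_right]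
    calc |(inner ℝ (B i) (F (P x) - F (P y)) : ℝ)| ≤ ‖B i‖ * ‖F (P x) - F (P y)‖ :=
          abs_real_inner_le_norm _ _
      _ = ‖F (P x) - F (P y)‖ := by rw [B.orthonormal.1 i, one_mul]
      _ ≤ (K₀' : ℝ) * ‖P x - P y‖ := hFlip x hx y hy
      _ = (K₀' : ℝ) * dist (P x) (P y) := by rw [dist_eq_norm]
  choose gi hgilip hgieq using fun i => (hfi i).extend_real
  set g : V → Vᗮ := fun z => ∑ i, gi i z • B i with hg
  refine ⟨g, ⟨m * K₀', ?_⟩, ?_⟩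
  · apply LipschitzWith.of_dist_le_mul
    intro z z'
    rw [dist_eq_norm]
    have hsub : g z - g z' = ∑ i, (gi i z - gi i z') • B i := by
      rw [hg]
      simp only [← Finset.sum_sub_distrib, sub_smul]
    rw [hsub]
    calc ‖∑ i, (gi i z - gi i z') • B i‖ ≤ ∑ i, ‖(gi i z - gi i z') • B i‖ :=
          norm_sum_le _ _
      _ ≤ ∑ _i : Fin m, (K₀' : ℝ) * dist z z' := by
          apply Finset.sum_le_sum
          intro i _
          rw [norm_smul, B.orthonormal.1 i, mul_one]
          have hd := (hgilip i).dist_le_mul z z'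
          rw [Real.dist_eq] at hd
          exact hd
      _ = ((m * K₀' : ℝ≥0) : ℝ) * dist z z' := by
          rw [Finset.sum_const, Finset.card_univ, Fintype.card_fin]
          push_cast
          ring
  · intro x hx
    refine ⟨P x, ?_⟩
    have hzG : P x ∈ G := ⟨x, hx, rfl⟩
    have hgz : g (P x) = F (P x) := by
      rw [hg]
      have h1 : ∀ i, gi i (P x) = (inner ℝ (B i) (F (P x)) : ℝ) := fun i =>
        ((hgieq i) hzG).symm
      simp only [h1]
      have h2 : ∀ i, (inner ℝ (B i) (F (P x)) : ℝ) = B.repr (F (P x)) i := fun i =>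
        (B.repr_apply_apply _ i).symm
      simp only [h2]
      exact B.sum_repr (F (P x))
    rw [hgz, hFPx x hx]
    exact (Submodule.starProjection_add_starProjection_orthogonal (K := V) x).symm

/-- The main covering lemma: a pointwise cone condition (with a point-dependent plane
and radius but a uniform constant `c < 1`) yields a countable Lipschitz-graph cover. -/
lemma cover_of_pointwise_cone {j : ℕ} (hj : j ≤ n) (A : Set (EuclideanSpace ℝ (Fin n)))
    (c : ℝ) (hc0 : 0 ≤ c) (hc1 : c < 1)
    (H : ∀ x ∈ A, ∃ r > (0:ℝ), ∃ W : Submodule ℝ (EuclideanSpace ℝ (Fin n)),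
      finrank ℝ W = j ∧ ∀ y ∈ A, dist y x ≤ r → ‖projQ W (y - x)‖ ≤ c * dist y x) :
    ∃ (W : ℕ → Submodule ℝ (EuclideanSpace ℝ (Fin n))) (g : ∀ k, (W k) → (W k)ᗮ),
      (∀ k, finrank ℝ (W k) = j) ∧ (∀ k, ∃ K : ℝ≥0, LipschitzWith K (g k)) ∧
      A ⊆ ⋃ k, lipGraph (W k) (g k) := by
  classical
  set τ : ℝ := (1 - c) / 2 with hτdef
  have hτ : 0 < τ := by simp only [hτdef]; linarith
  set c' : ℝ := c + τ with hc'def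
  have hc' : c' < 1 := by simp only [hc'def, hτdef]; linarith
  have hc'0 : 0 ≤ c' := by positivity
  set K₀ : ℝ := c' / (1 - c') with hK₀def
  obtain ⟨W0, -, hW0⟩ := exists_superset_finrank hj ⊥ (by simp)
  set SS : Set (EuclideanSpace ℝ (Fin n) →L[ℝ] EuclideanSpace ℝ (Fin n)) :=
    {q | ∃ W : Submodule ℝ (EuclideanSpace ℝ (Fin n)), finrank ℝ W = j ∧ projQ W = q}
    with hSS
  have hSSne : SS.Nonempty := ⟨projQ W0, W0, hW0, rfl⟩
  haveI : Nonempty ↥SS := hSSne.to_subtype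
  obtain ⟨u, hu_count, hu_dense⟩ := TopologicalSpace.exists_countable_dense ↥SS
  have huval_count : (Subtype.val '' u :
      Set (EuclideanSpace ℝ (Fin n) →L[ℝ] EuclideanSpace ℝ (Fin n))).Countable :=
    hu_count.image _
  have huval_ne : (Subtype.val '' u).Nonempty := (hu_dense.nonempty).image _
  obtain ⟨f, hf⟩ := huval_count.exists_eq_range huval_ne
  have hfSS : ∀ i, ∃ W : Submodule ℝ (EuclideanSpace ℝ (Fin n)),
      finrank ℝ W = j ∧ projQ W = f i := by
    intro i
    have : f i ∈ Subtype.val '' u := by rw [hf]; exact ⟨i, rfl⟩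
    obtain ⟨y, -, hy⟩ := this
    exact hy ▸ y.2
  choose Wp hWpj hWpq using hfSS
  have hdens : ∀ q ∈ SS, ∃ i : ℕ, ‖projQ (Wp i) - q‖ < τ := by
    intro q hq
    obtain ⟨⟨y, hySS⟩, hyb, hyu⟩ := Metric.dense_iff.1 hu_dense ⟨q, hq⟩ τ hτ
    have : y ∈ Subtype.val '' u := ⟨⟨y, hySS⟩, hyu, rfl⟩
    rw [hf] at this
    obtain ⟨i, hi⟩ := this
    refine ⟨i, ?_⟩
    have hdist : dist y q < τ := by
      have h := Subtype.dist_eq (⟨y, hySS⟩ : ↥SS) ⟨q, hq⟩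
      have hb := mem_ball.mp hyb
      rw [h] at hb
      exact hb
    rw [hWpq, hi, ← dist_eq_norm]
    exact hdist
  obtain ⟨D, hD_count, hD_dense⟩ :=
    TopologicalSpace.exists_countable_dense (EuclideanSpace ℝ (Fin n))
  obtain ⟨d, hd⟩ := hD_count.exists_eq_range hD_dense.nonempty
  set rm : ℕ → ℝ := fun m => 1 / (m + 1) with hrm
  have hrmpos : ∀ m, 0 < rm m := by
    intro m; simp only [hrm]; positivity
  set piece : ℕ × ℕ × ℕ → Set (EuclideanSpace ℝ (Fin n)) := fun p =>
    {x | x ∈ A ∧ dist x (d p.2.2) ≤ rm p.2.1 / 4 ∧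
      ∃ W : Submodule ℝ (EuclideanSpace ℝ (Fin n)),
      finrank ℝ W = j ∧ ‖projQ W - f p.1‖ ≤ τ ∧
      ∀ y ∈ A, dist y x ≤ rm p.2.1 → ‖projQ W (y - x)‖ ≤ c * dist y x} with hpiece
  have paircone : ∀ p : ℕ × ℕ × ℕ, ∀ x ∈ piece p, ∀ y ∈ piece p,
      ‖projQ (Wp p.1) (x - y)‖
        ≤ K₀ * ‖((orthogonalProjection (Wp p.1) (x - y)) : EuclideanSpace ℝ (Fin n))‖ := by
    rintro ⟨i, m, l⟩ x hx y hy
    obtain ⟨hxA, hxl, Wx, hWxj, hWxτ, hWxcone⟩ := hx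
    obtain ⟨hyA, hyl, -⟩ := hy
    have hdxy : dist y x ≤ rm m := by
      calc dist y x ≤ dist y (d l) + dist x (d l) := dist_triangle_right _ _ _
        _ ≤ rm m / 4 + rm m / 4 := add_le_add hyl hxl
        _ ≤ rm m := by linarith [(hrmpos m).le]
    have h1 : ‖projQ Wx (y - x)‖ ≤ c * dist y x := hWxcone y hyA hdxy
    have h2 : ‖projQ (Wp i) (y - x)‖ ≤ c' * ‖y - x‖ := by
      have ha : projQ (Wp i) (y - x) =
          projQ Wx (y - x) + (projQ (Wp i) - projQ Wx) (y - x) := by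
        simp
      rw [ha]
      have hb : ‖(projQ (Wp i) - projQ Wx) (y - x)‖ ≤ τ * ‖y - x‖ := by
        have hc2 : ‖projQ (Wp i) - projQ Wx‖ ≤ τ := by
          have h3 : ‖projQ Wx - f i‖ ≤ τ := hWxτ
          have h4 : projQ (Wp i) - projQ Wx = -(projQ Wx - f i) := by
            rw [hWpq]; abel
          rw [h4, norm_neg]
          exact h3
        calc ‖(projQ (Wp i) - projQ Wx) (y - x)‖
            ≤ ‖projQ (Wp i) - projQ Wx‖ * ‖y - x‖ := ContinuousLinearMap.le_opNorm _ _
          _ ≤ τ * ‖y - x‖ := mul_le_mul_of_nonneg_right hc2 (norm_nonneg _)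
      calc ‖projQ Wx (y - x) + (projQ (Wp i) - projQ Wx) (y - x)‖
          ≤ ‖projQ Wx (y - x)‖ + ‖(projQ (Wp i) - projQ Wx) (y - x)‖ := norm_add_le _ _
        _ ≤ c * dist y x + τ * ‖y - x‖ := add_le_add h1 hb
        _ = c' * ‖y - x‖ := by rw [dist_eq_norm]; ring
    have hsymm : ‖projQ (Wp i) (x - y)‖ = ‖projQ (Wp i) (y - x)‖ := by
      rw [show (x - y) = -(y - x) by abel, map_neg, norm_neg]
    have hdecomp : ‖y - x‖
        ≤ ‖((orthogonalProjection (Wp i) (y - x)) : EuclideanSpace ℝ (Fin n))‖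
        + ‖projQ (Wp i) (y - x)‖ := by
      conv_lhs => rw [← Submodule.starProjection_add_starProjection_orthogonal (K := Wp i) (y - x)]
      exact norm_add_le _ _
    have hQ : ‖projQ (Wp i) (y - x)‖
        ≤ K₀ * ‖((orthogonalProjection (Wp i) (y - x)) : EuclideanSpace ℝ (Fin n))‖ := by
      set a := ‖projQ (Wp i) (y - x)‖
      set b := ‖((orthogonalProjection (Wp i) (y - x)) : EuclideanSpace ℝ (Fin n))‖
      have ha0 : 0 ≤ a := norm_nonneg _
      have hb0 : 0 ≤ b := norm_nonneg _
      have h5 : a ≤ c' * (b + a) := le_trans h2 (by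
        apply mul_le_mul_of_nonneg_left _ hc'0
        linarith [hdecomp])
      rw [hK₀def, div_mul_eq_mul_div, le_div_iff₀ (by linarith)]
      nlinarith
    have hsymm2 : ((orthogonalProjection (Wp i) (x - y)) : EuclideanSpace ℝ (Fin n))
        = -((orthogonalProjection (Wp i) (y - x)) : EuclideanSpace ℝ (Fin n)) := by
      rw [show (x - y) = -(y - x) by abel, map_neg]
      simp
    rw [hsymm, hsymm2, norm_neg]
    exact hQ
  have hgr : ∀ p : ℕ × ℕ × ℕ, ∃ g : (Wp p.1) → (Wp p.1)ᗮ,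
      (∃ K : ℝ≥0, LipschitzWith K g) ∧ piece p ⊆ lipGraph (Wp p.1) g := fun p =>
    graph_piece (Wp p.1) (piece p) K₀ (paircone p)
  choose gg hglip hgsub using hgr
  set e : ℕ ≃ ℕ × ℕ × ℕ := (Denumerable.eqv (ℕ × ℕ × ℕ)).symm with he
  refine ⟨fun k => Wp (e k).1, fun k => gg (e k), fun k => hWpj _, fun k => hglip _, ?_⟩
  intro x hxA
  obtain ⟨r, hr, W, hWj, hcone⟩ := H x hxA
  obtain ⟨m, hm⟩ := exists_nat_one_div_lt hr
  have hiq : projQ W ∈ SS := ⟨W, hWj, rfl⟩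
  obtain ⟨i, hi⟩ := hdens _ hiq
  have hex : ∃ l : ℕ, dist x (d l) ≤ rm m / 4 := by
    have h4 : 0 < rm m / 4 := by linarith [hrmpos m]
    obtain ⟨y, hy1, hy2⟩ := Metric.dense_iff.1 hD_dense x (rm m / 4) h4
    have hyD : y ∈ D := hy2
    rw [hd] at hyD
    obtain ⟨l, rfl⟩ := hyD
    exact ⟨l, by rw [mem_ball] at hy1; linarith [dist_comm x (d l) ▸ hy1.le]⟩
  obtain ⟨l, hl⟩ := hex
  have hxp : x ∈ piece (i, m, l) := by
    refine ⟨hxA, hl, W, hWj, ?_, ?_⟩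
    · rw [show projQ W - f i = -(projQ (Wp i) - projQ W) by rw [hWpq]; abel, norm_neg]
      exact (hi).le
    · intro y hy hdy
      exact hcone y hy (hdy.trans (by rw [hrm] at *; exact hm.le))
  refine mem_iUnion.2 ⟨e.symm (i, m, l), ?_⟩
  exact hgsub _ (by rw [Equiv.apply_symm_apply]; exact hxp)

/-- From a one-sided approximation at all scales below `r` one obtains a cone estimate. -/
lemma cone_of_local {x : EuclideanSpace ℝ (Fin n)} {A : Set (EuclideanSpace ℝ (Fin n))}
    {W : Submodule ℝ (EuclideanSpace ℝ (Fin n))} {δ r : ℝ}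
    (h : ∀ ρ ∈ Set.Ioc (0:ℝ) r, Metric.closedBall x ρ ∩ A ⊆ nbhd (affPlane x W) (δ * ρ)) :
    ∀ y ∈ A, dist y x ≤ r → ‖projQ W (y - x)‖ ≤ δ * dist y x := by
  intro y hy hd
  rcases eq_or_ne y x with rfl | hne
  · simp
  · have hpos : 0 < dist y x := dist_pos.2 hne
    have hmem := h (dist y x) ⟨hpos, hd⟩ ⟨mem_closedBall.2 le_rfl, hy⟩
    exact norm_projQ_sub_le hmem

/-- The fine weak `ρ0` property forces exact local planarity, hence a `0`-cone. -/
lemma weak_pc {j : ℕ} (hj : j ≤ n) (A : Set (EuclideanSpace ℝ (Fin n)))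
    (hA : ∀ δ ∈ Set.Ioo (0:ℝ) 1, RwRho0 j δ A) :
    ∀ x ∈ A, ∃ r > (0:ℝ), ∃ W : Submodule ℝ (EuclideanSpace ℝ (Fin n)),
      finrank ℝ W = j ∧
      ∀ y ∈ A, dist y x ≤ r → ‖projQ W (y - x)‖ ≤ 0 * dist y x := by
  classical
  obtain ⟨Wc, -, hWc⟩ := exists_superset_finrank hj ⊥ (by simp)
  by_cases hsub : A.Subsingleton
  · intro x hx
    refine ⟨1, one_pos, Wc, hWc, fun y hy _ => ?_⟩
    have hyx : y = x := hsub hy hx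
    simp [hyx]
  · rw [Set.not_subsingleton_iff] at hsub
    obtain ⟨a, ha, b, hb, hab⟩ := hsub
    set ρ : ℝ := dist a b / 2 with hρdef
    have hρ : 0 < ρ := by
      have := dist_pos.2 hab
      simp only [hρdef]; linarith
    have hkey : ∀ m : ℕ, ∀ x ∈ A, ∃ W : Submodule ℝ (EuclideanSpace ℝ (Fin n)),
        finrank ℝ W = j ∧
        Metric.closedBall x ρ ∩ A ⊆ nbhd (affPlane x W) ((1 / (m + 2)) * ρ) := by
      intro m x hx
      have hδ : (1 / (m + 2) : ℝ) ∈ Set.Ioo (0:ℝ) 1 := by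
        constructor
        · positivity
        · rw [div_lt_one (by positivity)]
          have : (0:ℝ) ≤ m := Nat.cast_nonneg m
          linarith
      obtain ⟨ρ0, hρ0, ⟨c₀, hc₀⟩, hmain⟩ := hA _ hδ
      have hρρ0 : ρ ≤ ρ0 := by
        have h1 : dist a c₀ ≤ ρ0 := mem_closedBall.1 (hc₀ ha)
        have h2 : dist b c₀ ≤ ρ0 := mem_closedBall.1 (hc₀ hb)
        have h3 : dist a b ≤ dist a c₀ + dist c₀ b := dist_triangle _ _ _
        rw [dist_comm c₀ b] at h3
        simp only [hρdef]
        linarith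
      exact hmain x hx ρ ⟨hρ, hρρ0⟩
    intro x hx
    set s : Set (EuclideanSpace ℝ (Fin n)) :=
      (fun y => y - x) '' (A ∩ Metric.closedBall x ρ) with hs
    have hrk : finrank ℝ (span ℝ s) ≤ j := by
      by_contra hgt
      push_neg at hgt
      obtain ⟨bs, hbs, hbspan, hbind⟩ := exists_linearIndependent ℝ s
      have hbfin : bs.Finite := hbind.setFinite
      haveI := hbfin.fintype
      have hcard : finrank ℝ (span ℝ s) = Fintype.card bs := by
        rw [← hbspan, finrank_span_set_eq_card hbind, Set.toFinset_card]
      choose Wm hWmj hWmsub using fun m : ℕ => hkey m x hx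
      have happrox : ∀ (m : ℕ) (β : bs), ∃ v : EuclideanSpace ℝ (Fin n), v ∈ Wm m ∧
          ‖(β : EuclideanSpace ℝ (Fin n)) - v‖ ≤ ρ / (m + 2) := by
        intro m β
        have hβs : (β : EuclideanSpace ℝ (Fin n)) ∈ s := hbs β.2
        obtain ⟨y, hy, hyeq⟩ := hβs
        have hynb : y ∈ nbhd (affPlane x (Wm m)) ((1 / (m + 2)) * ρ) := by
          apply hWmsub m
          exact ⟨hy.2, hy.1⟩
        obtain ⟨z, hz, hdz⟩ := (isClosed_affPlane x (Wm m)).exists_infDist_eq_dist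
          ⟨x, mem_affPlane_self x (Wm m)⟩ y
        refine ⟨z - x, hz, ?_⟩
        have h1 : dist y z ≤ (1 / (m + 2)) * ρ := by rw [← hdz]; exact hynb
        have h2 : (β : EuclideanSpace ℝ (Fin n)) - (z - x) = y - z := by
          rw [← hyeq]; exact sub_sub_sub_cancel_right y z x
        rw [h2, ← dist_eq_norm]
        calc dist y z ≤ (1 / (m + 2)) * ρ := h1
          _ = ρ / (m + 2) := by ring
      choose u hu1 hu2 using happrox
      have htend : Filter.Tendsto (fun m : ℕ => fun β : bs => u m β) Filter.atTop
          (nhds (fun β : bs => (β : EuclideanSpace ℝ (Fin n)))) := by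
        rw [tendsto_pi_nhds]
        intro β
        rw [tendsto_iff_dist_tendsto_zero]
        apply squeeze_zero (g := fun m : ℕ => ρ / (m + 2)) (fun m => dist_nonneg)
          (fun m => by rw [dist_comm, dist_eq_norm]; exact hu2 m β)
        have h0 : Filter.Tendsto (fun m : ℕ => ρ * (1 / (m + 1))) Filter.atTop (nhds 0) := by
          have := tendsto_one_div_add_atTop_nhds_zero_nat (𝕜 := ℝ)
          simpa using this.const_mul ρ
        apply squeeze_zero (fun m => by positivity) _ h0
        intro m
        have h12 : (1:ℝ)/(m+2) ≤ 1/(m+1) := by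
          apply one_div_le_one_div_of_le (by positivity)
          linarith
        calc ρ / (m+2) = ρ * (1/(m+2)) := by ring
          _ ≤ ρ * (1/(m+1)) := mul_le_mul_of_nonneg_left h12 hρ.le
      have hO : IsOpen {f : bs → EuclideanSpace ℝ (Fin n) | LinearIndependent ℝ f} :=
        isOpen_setOf_linearIndependent
      have hev := htend.eventually (hO.mem_nhds hbind)
      obtain ⟨m, hm⟩ := hev.exists
      have hw : LinearIndependent ℝ (fun β : bs => (⟨u m β, hu1 m β⟩ : Wm m)) := by
        apply LinearIndependent.of_comp (Wm m).subtype
        exact hm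
      have hcard2 := hw.fintype_card_le_finrank
      rw [hWmj m] at hcard2
      omega
    obtain ⟨W, hle, hWj⟩ := exists_superset_finrank hj _ hrk
    refine ⟨ρ, hρ, W, hWj, fun y hy hd => ?_⟩
    have hys : y - x ∈ s := ⟨y, ⟨hy, mem_closedBall.2 hd⟩, rfl⟩
    have hyW : y - x ∈ W := hle (subset_span hys)
    rw [projQ_eq_zero hyW]
    simp

end LipschitzCoverAux

/-- a set with the `ρ0`-uniform fine weak property or any strong
Reifenberg property is covered by countably many Lipschitz graphs over
`j`-dimensional planes. -/
theorem lipschitz_graph_cover (n j : ℕ) (hj : j ≤ n) (A : Set (EuclideanSpace ℝ (Fin n)))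
    (hA : RGamma .w .rho0 j Option.none A ∨
      ∃ (β : Beta) (γ : Option ℝ), memDelta γ ∧ RGamma .s β j γ A) :
    ∃ (W : ℕ → Submodule ℝ (EuclideanSpace ℝ (Fin n))) (g : ∀ k, (W k) → (W k)ᗮ),
      (∀ k, Module.finrank ℝ (W k) = j) ∧
      (∀ k, ∃ K : ℝ≥0, LipschitzWith K (g k)) ∧
      A ⊆ ⋃ k, lipGraph (W k) (g k) := by
  classical
  have main : ∃ c : ℝ, 0 ≤ c ∧ c < 1 ∧
      ∀ x ∈ A, ∃ r > (0:ℝ), ∃ W : Submodule ℝ (EuclideanSpace ℝ (Fin n)),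
        Module.finrank ℝ W = j ∧
        ∀ y ∈ A, dist y x ≤ r → ‖projQ W (y - x)‖ ≤ c * dist y x := by
    rcases hA with hw | ⟨β, γ, hγ, hs⟩
    · exact ⟨0, le_rfl, one_pos, weak_pc hj A hw⟩
    · -- strong cases: extract a δ ∈ (0,1) with the `RDelta` property
      have hδ : ∃ δ : ℝ, δ ∈ Set.Ioo (0:ℝ) 1 ∧ RDelta .s β j δ A := by
        rcases hγ with rfl | ⟨dd, hdd, rfl⟩
        · exact ⟨1/2, by norm_num, hs (1/2) (by norm_num)⟩
        · exact ⟨dd, hdd, hs⟩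
      obtain ⟨δ, hδIoo, hRD⟩ := hδ
      refine ⟨δ, hδIoo.1.le, hδIoo.2, ?_⟩
      cases β with
      | none =>
        intro x hx
        obtain ⟨ρy, hρy, W, hWj, hc⟩ := hRD x hx
        exact ⟨ρy, hρy, W, hWj, cone_of_local hc⟩
      | rho =>
        intro x hx
        obtain ⟨ρy, hρy, W, hWj, hc⟩ := hRD x hx
        refine ⟨ρy, hρy, W, hWj, cone_of_local ?_⟩
        intro ρ hρ
        exact hc x ⟨mem_closedBall.2 (by simp [hρy.le]), hx⟩ ρ hρ
      | rho0 =>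
        obtain ⟨ρ0, hρ0, -, W, hWj, hc⟩ := hRD
        intro x hx
        exact ⟨ρ0, hρ0, W, hWj, cone_of_local (fun ρ hρ => hc x hx ρ hρ)⟩
  obtain ⟨c, hc0, hc1, H⟩ := main
  exact cover_of_pointwise_cone hj A c hc0 hc1 H


end ReifenbergPaper
end
end

section
/- Let n ∈ ℕ, j ≤ n, and suppose A ⊆ ℝⁿ satisfies either A ∈ R(w,ρ0,fine;j) or A ∈ R(s,ρ0,γ;j) for some γ ∈ Δ := {fine} ∪ (0,1). Then there exist Q ∈ ℕ, j-dimensional linear subspaces L_1, …, L_Q ⊆ ℝⁿ and Lipschitz functions g_k : L_k → L_k^⊥ (1 ≤ k ≤ Q) such that A ⊆ ⋃_{k=1}^{Q} graph(g_k); i.e. a set satisfying a ρ0-uniform fine weak or ρ0-uniform strong Reifenberg property is covered by finitely many Lipschitz graphs over j-dimensional planes. -/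
open Metric Set MeasureTheory ENNReal NNReal

attribute [local instance] Classical.propDecidable

noncomputable section

namespace ReifenbergPaper

-- lemma 0
lemma exists_plane (n j : ℕ) (hj : j ≤ n) :
    ∃ W : Submodule ℝ (EuclideanSpace ℝ (Fin n)), Module.finrank ℝ W = j := by
  have ho : Orthonormal ℝ ((EuclideanSpace.basisFun (Fin n) ℝ) ∘ Fin.castLE hj) :=
    (EuclideanSpace.basisFun (Fin n) ℝ).orthonormal.comp _ (Fin.castLE_injective hj)
  refine ⟨Submodule.span ℝ (Set.range ((EuclideanSpace.basisFun (Fin n) ℝ) ∘ Fin.castLE hj)), ?_⟩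
  rw [finrank_span_eq_card ho.linearIndependent, Fintype.card_fin]

lemma cone_to_graph {n : ℕ} (W : Submodule ℝ (EuclideanSpace ℝ (Fin n)))
    (S : Set (EuclideanSpace ℝ (Fin n))) (lam : ℝ)
    (hcone : ∀ x ∈ S, ∀ z ∈ S,
      ‖(Submodule.orthogonalProjectionOnto Wᗮ (x - z) : EuclideanSpace ℝ (Fin n))‖ ≤
        lam * ‖(Submodule.orthogonalProjectionOnto W (x - z) : EuclideanSpace ℝ (Fin n))‖) :
    ∃ g : W → Wᗮ, (∃ K : ℝ≥0, LipschitzWith K g) ∧ S ⊆ lipGraph W g := by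
  classical
  set P : EuclideanSpace ℝ (Fin n) →L[ℝ] W := Submodule.orthogonalProjectionOnto W with hPdef
  set P' : EuclideanSpace ℝ (Fin n) →L[ℝ] Wᗮ := Submodule.orthogonalProjectionOnto Wᗮ with hP'def
  set μ : ℝ≥0 := lam.toNNReal with hμdef
  have hcone' : ∀ x ∈ S, ∀ z ∈ S,
      ‖(P' (x - z) : EuclideanSpace ℝ (Fin n))‖ ≤ μ * ‖(P (x - z) : EuclideanSpace ℝ (Fin n))‖ := by
    intro x hx z hz
    exact (hcone x hx z hz).trans
      (mul_le_mul_of_nonneg_right (Real.le_coe_toNNReal lam) (norm_nonneg _))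
  set T : Set W := (fun x => P x) '' S with hTdef
  set F : W → Wᗮ := fun w => if h : ∃ x ∈ S, P x = w then P' h.choose else 0 with hFdef
  have hF : ∀ w, (h : ∃ x ∈ S, P x = w) → F w = P' h.choose := by
    intro w h
    simp only [hFdef, dif_pos h]
  have hsame : ∀ x ∈ S, ∀ z ∈ S, P x = P z → P' x = P' z := by
    intro x hx z hz hPeq
    have h0 : P (x - z) = 0 := by rw [map_sub, hPeq, sub_self]
    have h1 : ‖(P' (x - z) : EuclideanSpace ℝ (Fin n))‖ ≤ 0 := by
      simpa [h0] using hcone' x hx z hz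
    have h2 : P' (x - z) = 0 := by
      rw [← Submodule.coe_eq_zero]
      exact norm_le_zero_iff.mp h1
    rw [map_sub] at h2
    exact sub_eq_zero.mp h2
  have hlip : LipschitzOnWith μ F T := by
    apply LipschitzOnWith.of_dist_le_mul
    intro w hw w' hw'
    obtain ⟨x, hxS, hPx⟩ := hw
    obtain ⟨x', hxS', hPx'⟩ := hw'
    have hPx : P x = w := hPx
    have hPx' : P x' = w' := hPx'
    have e1 : F w = P' x := by
      rw [hF w ⟨x, hxS, hPx⟩]
      exact hsame _ (⟨x, hxS, hPx⟩ : ∃ x ∈ S, P x = w).choose_spec.1 x hxS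
        (by rw [(⟨x, hxS, hPx⟩ : ∃ x ∈ S, P x = w).choose_spec.2, ← hPx])
    have e1' : F w' = P' x' := by
      rw [hF w' ⟨x', hxS', hPx'⟩]
      exact hsame _ (⟨x', hxS', hPx'⟩ : ∃ x ∈ S, P x = w').choose_spec.1 x' hxS'
        (by rw [(⟨x', hxS', hPx'⟩ : ∃ x ∈ S, P x = w').choose_spec.2, ← hPx'])
    have ed : dist (F w) (F w') = ‖(P' (x - x') : EuclideanSpace ℝ (Fin n))‖ := by
      rw [dist_eq_norm, e1, e1', ← map_sub]; rfl
    have ed2 : (μ : ℝ) * dist w w' = μ * ‖(P (x - x') : EuclideanSpace ℝ (Fin n))‖ := by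
      rw [dist_eq_norm, map_sub, hPx, hPx']; rfl
    rw [ed, ed2]
    exact hcone' x hxS x' hxS'
  set ψ := (stdOrthonormalBasis ℝ ↥Wᗮ).repr with hψdef
  set e := WithLp.equiv 2 (Fin (Module.finrank ℝ ↥Wᗮ) → ℝ) with hedef
  have hlip1 : LipschitzOnWith (1 * 1 * μ) ((⇑e ∘ ⇑ψ) ∘ F) T :=
    ((PiLp.lipschitzWith_ofLp 2 _).comp ψ.isometry.lipschitz).comp_lipschitzOnWith hlip
  obtain ⟨g1, hg1lip, hg1eq⟩ := hlip1.extend_pi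
  have hesymm : LipschitzWith _ e.symm :=
    (PiLp.antilipschitzWith_ofLp 2 _).to_rightInverse (fun x => e.apply_symm_apply x)
  refine ⟨fun w => ψ.symm (e.symm (g1 w)), ⟨_, (ψ.symm.isometry.lipschitz.comp hesymm).comp hg1lip⟩, ?_⟩
  intro z hz
  have hzT : P z ∈ T := ⟨z, hz, rfl⟩
  have hFz : F (P z) = P' z := by
    rw [hF (P z) ⟨z, hz, rfl⟩]
    exact hsame _ (⟨z, hz, rfl⟩ : ∃ x ∈ S, P x = P z).choose_spec.1 z hz
      (⟨z, hz, rfl⟩ : ∃ x ∈ S, P x = P z).choose_spec.2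
  have hg1z : g1 (P z) = e (ψ (F (P z))) := (hg1eq hzT).symm
  refine ⟨P z, ?_⟩
  show z = ↑(P z) + ↑(ψ.symm (e.symm (g1 (P z))))
  rw [hg1z, hFz]
  simp only [Equiv.symm_apply_apply, LinearIsometryEquiv.symm_apply_apply]
  exact (Submodule.starProjection_add_starProjection_orthogonal (K := W) z).symm

lemma finite_cover {n : ℕ} (A : Set (EuclideanSpace ℝ (Fin n))) (c : EuclideanSpace ℝ (Fin n))
    (R r : ℝ) (hr : 0 < r) (hA : A ⊆ Metric.closedBall c R) :
    ∃ (Q : ℕ) (y : Fin Q → EuclideanSpace ℝ (Fin n)),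
      (∀ k, y k ∈ A) ∧ A ⊆ ⋃ k, Metric.closedBall (y k) r := by
  classical
  have htb : TotallyBounded A := (isCompact_closedBall c R).totallyBounded.subset hA
  obtain ⟨t, hts, htf, hcov⟩ := totallyBounded_iff_subset.1 htb _ (dist_mem_uniformity hr)
  haveI : Fintype t := htf.fintype
  refine ⟨Fintype.card t, fun k => ((Fintype.equivFin t).symm k : EuclideanSpace ℝ (Fin n)),
    fun k => hts ((Fintype.equivFin t).symm k).2, ?_⟩
  intro x hx
  obtain ⟨u, hu⟩ := Set.mem_iUnion₂.1 (hcov hx)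
  obtain ⟨hut, hxu⟩ := hu
  refine Set.mem_iUnion.2 ⟨Fintype.equivFin t ⟨u, hut⟩, ?_⟩
  simp only [Equiv.symm_apply_apply]
  exact Metric.mem_closedBall.2 (le_of_lt hxu)

lemma affPlane_closed {n : ℕ} (y : EuclideanSpace ℝ (Fin n))
    (W : Submodule ℝ (EuclideanSpace ℝ (Fin n))) : IsClosed (affPlane y W) := by
  have : affPlane y W = (fun z => z - y) ⁻¹' (W : Set (EuclideanSpace ℝ (Fin n))) := rfl
  rw [this]
  exact (Submodule.closed_of_finiteDimensional W).preimage (continuous_id.sub continuous_const)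

lemma self_mem_affPlane {n : ℕ} (y : EuclideanSpace ℝ (Fin n))
    (W : Submodule ℝ (EuclideanSpace ℝ (Fin n))) : y ∈ affPlane y W := by
  show y - y ∈ W
  simp

lemma exists_exact_plane {n : ℕ} (j : ℕ) (r : ℝ) (hr : 0 < r) (y : EuclideanSpace ℝ (Fin n))
    (S : Set (EuclideanSpace ℝ (Fin n)))
    (h : ∀ m : ℕ, ∃ W : Submodule ℝ (EuclideanSpace ℝ (Fin n)), Module.finrank ℝ W = j ∧
      ∀ z ∈ S, Metric.infDist z (affPlane y W) ≤ (((m : ℝ) + 2))⁻¹ * r) :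
    ∃ U : Submodule ℝ (EuclideanSpace ℝ (Fin n)), Module.finrank ℝ U = j ∧
      ∀ z ∈ S, z - y ∈ U := by
  classical
  choose W hWrank hWapp using h
  set b : ∀ m : ℕ, OrthonormalBasis (Fin j) ℝ (W m) :=
    fun m => (stdOrthonormalBasis ℝ (W m)).reindex (finCongr (hWrank m)) with hbdef
  set u : ℕ → Fin j → EuclideanSpace ℝ (Fin n) := fun m i => (b m i : EuclideanSpace ℝ (Fin n))
    with hudef
  have hu_on : ∀ m, Orthonormal ℝ (u m) := by
    intro m
    rw [orthonormal_iff_ite]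
    intro i k
    rw [show u m i = ((b m i : W m) : EuclideanSpace ℝ (Fin n)) from rfl, ← Submodule.coe_inner]
    exact orthonormal_iff_ite.1 (b m).orthonormal i k
  have humem : ∀ m, u m ∈ Metric.closedBall (0 : Fin j → EuclideanSpace ℝ (Fin n)) 1 := by
    intro m
    rw [Metric.mem_closedBall, dist_zero_right]
    refine (pi_norm_le_iff_of_nonneg zero_le_one).2 fun i => ?_
    rw [show u m i = ((b m i : W m) : EuclideanSpace ℝ (Fin n)) from rfl, Submodule.norm_coe]
    exact le_of_eq ((b m).orthonormal.1 i)
  obtain ⟨v, hvK, φ, hφ, hconv⟩ := tendsto_subseq_of_bounded Metric.isBounded_closedBall humem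
  have hci : ∀ i, Filter.Tendsto (fun m => u (φ m) i) Filter.atTop (nhds (v i)) := by
    intro i
    exact (tendsto_pi_nhds.1 hconv) i
  have hv_on : Orthonormal ℝ v := by
    rw [orthonormal_iff_ite]
    intro i k
    have h1 : Filter.Tendsto (fun m => (inner ℝ (u (φ m) i) (u (φ m) k) : ℝ))
        Filter.atTop (nhds (inner ℝ (v i) (v k))) := (hci i).inner (hci k)
    have h2 : (fun m => (inner ℝ (u (φ m) i) (u (φ m) k) : ℝ)) =
        fun _ => if i = k then (1 : ℝ) else 0 := by
      funext m
      exact orthonormal_iff_ite.1 (hu_on (φ m)) i k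
    rw [h2] at h1
    exact tendsto_nhds_unique h1 tendsto_const_nhds
  refine ⟨Submodule.span ℝ (Set.range v), ?_, ?_⟩
  · rw [finrank_span_eq_card hv_on.linearIndependent, Fintype.card_fin]
  intro z hz
  set U := Submodule.span ℝ (Set.range v) with hUdef
  set a := z - y with hadef
  have key : ∀ m : ℕ, Metric.infDist a (U : Set (EuclideanSpace ℝ (Fin n))) ≤
      (((φ m : ℝ) + 2))⁻¹ * r + (‖a‖ + r) * ∑ i, ‖u (φ m) i - v i‖ := by
    intro m
    obtain ⟨p, hp, hpd⟩ := (affPlane_closed y (W (φ m))).exists_infDist_eq_dist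
      ⟨y, self_mem_affPlane y (W (φ m))⟩ z
    have hdz : dist z p ≤ (((φ m : ℝ) + 2))⁻¹ * r := by
      rw [← hpd]; exact hWapp (φ m) z hz
    have hdzr : dist z p ≤ r := by
      refine hdz.trans ?_
      have h2 : (((φ m : ℝ) + 2))⁻¹ ≤ 1 := by
        rw [inv_le_one_iff₀]
        right
        have : (0 : ℝ) ≤ (φ m : ℝ) := Nat.cast_nonneg _
        linarith
      nlinarith
    have hwmem : p - y ∈ W (φ m) := hp
    set wv : W (φ m) := ⟨p - y, hwmem⟩ with hwvdef
    have hrepr : (wv : EuclideanSpace ℝ (Fin n)) =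
        ∑ i, (inner ℝ (b (φ m) i) wv : ℝ) • u (φ m) i := by
      conv_lhs => rw [← (b (φ m)).sum_repr' wv]
      push_cast
      rfl
    have hwva : ‖(wv : EuclideanSpace ℝ (Fin n)) - a‖ = dist z p := by
      have he : (wv : EuclideanSpace ℝ (Fin n)) - a = p - z := by
        show (p - y) - (z - y) = p - z
        abel
      rw [he, dist_eq_norm, norm_sub_rev]
    have hcoef : ∀ i, |(inner ℝ (b (φ m) i) wv : ℝ)| ≤ ‖a‖ + r := by
      intro i
      have h1 : |(inner ℝ (b (φ m) i) wv : ℝ)| ≤ ‖b (φ m) i‖ * ‖wv‖ := abs_real_inner_le_norm _ _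
      rw [(b (φ m)).orthonormal.1 i, one_mul] at h1
      refine h1.trans ?_
      rw [Submodule.coe_norm]
      calc ‖(wv : EuclideanSpace ℝ (Fin n))‖
          ≤ ‖a‖ + ‖(wv : EuclideanSpace ℝ (Fin n)) - a‖ := norm_le_norm_add_norm_sub' _ _
        _ ≤ ‖a‖ + r := by rw [hwva]; linarith
    set q : EuclideanSpace ℝ (Fin n) := ∑ i, (inner ℝ (b (φ m) i) wv : ℝ) • v i with hqdef
    have hqU : q ∈ U := by
      refine Submodule.sum_mem _ fun i _ => Submodule.smul_mem _ _ ?_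
      exact Submodule.subset_span ⟨i, rfl⟩
    have h3 : Metric.infDist a (U : Set (EuclideanSpace ℝ (Fin n))) ≤ dist a q :=
      Metric.infDist_le_dist_of_mem hqU
    refine h3.trans ?_
    have h4 : dist a q ≤ ‖a - (wv : EuclideanSpace ℝ (Fin n))‖ +
        ‖(wv : EuclideanSpace ℝ (Fin n)) - q‖ := by
      rw [dist_eq_norm]
      exact norm_sub_le_norm_sub_add_norm_sub a _ q
    refine h4.trans ?_
    have h5 : ‖a - (wv : EuclideanSpace ℝ (Fin n))‖ ≤ (((φ m : ℝ) + 2))⁻¹ * r := by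
      rw [norm_sub_rev, hwva]
      exact hdz
    have h6 : ‖(wv : EuclideanSpace ℝ (Fin n)) - q‖ ≤ (‖a‖ + r) * ∑ i, ‖u (φ m) i - v i‖ := by
      rw [hrepr, hqdef, ← Finset.sum_sub_distrib]
      refine (norm_sum_le _ _).trans ?_
      rw [Finset.mul_sum]
      refine Finset.sum_le_sum fun i _ => ?_
      rw [← smul_sub, norm_smul, Real.norm_eq_abs]
      exact mul_le_mul_of_nonneg_right (hcoef i) (norm_nonneg _)
    linarith
  have hφtop : Filter.Tendsto (fun m : ℕ => ((φ m : ℝ) + 2)) Filter.atTop Filter.atTop :=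
    Filter.tendsto_atTop_add_const_right _ 2 (tendsto_natCast_atTop_atTop.comp hφ.tendsto_atTop)
  have h1 : Filter.Tendsto (fun m : ℕ => (((φ m : ℝ) + 2))⁻¹) Filter.atTop (nhds 0) :=
    hφtop.inv_tendsto_atTop
  have h2 : ∀ i : Fin j, Filter.Tendsto (fun m => ‖u (φ m) i - v i‖) Filter.atTop (nhds 0) := by
    intro i
    have := ((hci i).sub (tendsto_const_nhds (x := v i))).norm
    rwa [sub_self, norm_zero] at this
  have hsum : Filter.Tendsto (fun m => ∑ i, ‖u (φ m) i - v i‖) Filter.atTop (nhds 0) := by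
    have := tendsto_finset_sum (Finset.univ : Finset (Fin j)) (fun i _ => h2 i)
    simpa using this
  have hε : Filter.Tendsto (fun m => (((φ m : ℝ) + 2))⁻¹ * r +
      (‖a‖ + r) * ∑ i, ‖u (φ m) i - v i‖) Filter.atTop (nhds 0) := by
    have := (h1.mul_const r).add (hsum.const_mul (‖a‖ + r))
    simpa using this
  have h0 : Metric.infDist a (U : Set (EuclideanSpace ℝ (Fin n))) ≤ 0 := ge_of_tendsto' hε key
  have hmem : a ∈ (U : Set (EuclideanSpace ℝ (Fin n))) := by
    rw [(Submodule.closed_of_finiteDimensional U).mem_iff_infDist_zero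
      ⟨0, Submodule.zero_mem U⟩]
    exact le_antisymm h0 Metric.infDist_nonneg
  exact hmem

lemma strong_cone {n : ℕ} {A : Set (EuclideanSpace ℝ (Fin n))}
    {W : Submodule ℝ (EuclideanSpace ℝ (Fin n))} {δ ρ0 : ℝ}
    (hδ : δ ∈ Set.Ioo (0:ℝ) 1) (hρ0 : 0 < ρ0)
    (hA : ∀ x ∈ A, ∀ ρ ∈ Set.Ioc (0:ℝ) ρ0,
      Metric.closedBall x ρ ∩ A ⊆ nbhd (affPlane x W) (δ * ρ))
    {x z : EuclideanSpace ℝ (Fin n)} (hx : x ∈ A) (hz : z ∈ A) (hdist : dist x z ≤ ρ0) :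
    ‖(Submodule.orthogonalProjectionOnto Wᗮ (x - z) : EuclideanSpace ℝ (Fin n))‖ ≤
      (δ / Real.sqrt (1 - δ^2)) * ‖(Submodule.orthogonalProjectionOnto W (x - z) : EuclideanSpace ℝ (Fin n))‖ := by
  obtain ⟨hδ0, hδ1⟩ := hδ
  have hs : 0 < Real.sqrt (1 - δ^2) := Real.sqrt_pos.2 (by nlinarith)
  have hssq : (Real.sqrt (1 - δ^2))^2 = 1 - δ^2 := Real.sq_sqrt (by nlinarith)
  rcases eq_or_ne x z with rfl | hne
  · simp only [sub_self, map_zero, Submodule.coe_zero, norm_zero]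
    positivity
  set ρ := dist x z with hρdef
  have hρ0' : 0 < ρ := dist_pos.2 hne
  have hxmem : x ∈ Metric.closedBall z ρ ∩ A := ⟨Metric.mem_closedBall.2 le_rfl, hx⟩
  have hnb : x ∈ nbhd (affPlane z W) (δ * ρ) := hA z hz ρ ⟨hρ0', hdist⟩ hxmem
  have hinf : Metric.infDist x (affPlane z W) ≤ δ * ρ := hnb
  obtain ⟨p, hp, hpd⟩ := (affPlane_closed z W).exists_infDist_eq_dist
    ⟨z, self_mem_affPlane z W⟩ x
  have hdxp : dist x p ≤ δ * ρ := by rw [← hpd]; exact hinf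
  have hkey : (Submodule.orthogonalProjectionOnto Wᗮ (x - z) : EuclideanSpace ℝ (Fin n)) =
      (Submodule.orthogonalProjectionOnto Wᗮ (x - p) : EuclideanSpace ℝ (Fin n)) := by
    have hsplit : x - z = (x - p) + (p - z) := by abel
    have hpz : Submodule.orthogonalProjectionOnto Wᗮ (p - z) = 0 :=
      Submodule.orthogonalProjectionOnto_apply_of_mem_orthogonal
        (W.le_orthogonal_orthogonal hp)
    rw [hsplit, map_add, hpz, add_zero]
  have hle : ‖(Submodule.orthogonalProjectionOnto Wᗮ (x - z) : EuclideanSpace ℝ (Fin n))‖ ≤ δ * ρ := by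
    rw [hkey]
    calc ‖(Submodule.orthogonalProjectionOnto Wᗮ (x - p) : EuclideanSpace ℝ (Fin n))‖
        = ‖Submodule.orthogonalProjectionOnto Wᗮ (x - p)‖ := (Submodule.coe_norm _).symm
      _ ≤ ‖Submodule.orthogonalProjectionOnto Wᗮ‖ * ‖x - p‖ := (Submodule.orthogonalProjectionOnto Wᗮ).le_opNorm _
      _ ≤ 1 * ‖x - p‖ := by
          exact mul_le_mul_of_nonneg_right (Submodule.orthogonalProjectionOnto_norm_le _) (norm_nonneg _)
      _ = dist x p := by rw [one_mul, dist_eq_norm]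
      _ ≤ δ * ρ := hdxp
  set aa := ‖(Submodule.orthogonalProjectionOnto Wᗮ (x - z) : EuclideanSpace ℝ (Fin n))‖ with haa
  set bb := ‖(Submodule.orthogonalProjectionOnto W (x - z) : EuclideanSpace ℝ (Fin n))‖ with hbb
  have hpyth : ρ^2 = bb^2 + aa^2 := by
    rw [hρdef, dist_eq_norm, haa, hbb]
    rw [show ‖(Submodule.orthogonalProjectionOnto W (x - z) : EuclideanSpace ℝ (Fin n))‖ =
      ‖Submodule.orthogonalProjectionOnto W (x - z)‖ from (Submodule.coe_norm _).symm]
    rw [show ‖(Submodule.orthogonalProjectionOnto Wᗮ (x - z) : EuclideanSpace ℝ (Fin n))‖ =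
      ‖Submodule.orthogonalProjectionOnto Wᗮ (x - z)‖ from (Submodule.coe_norm _).symm]
    exact Submodule.norm_sq_eq_add_norm_sq_projection (x - z) W
  have haa0 : 0 ≤ aa := norm_nonneg _
  have hbb0 : 0 ≤ bb := norm_nonneg _
  have hA2 : aa^2*(1-δ^2) ≤ δ^2*bb^2 := by
    nlinarith [mul_self_le_mul_self haa0 hle]
  have h8 : (aa * Real.sqrt (1 - δ^2))^2 ≤ (δ*bb)^2 := by
    calc (aa * Real.sqrt (1 - δ^2))^2 = aa^2 * (Real.sqrt (1 - δ^2))^2 := by ring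
      _ = aa^2 * (1 - δ^2) := by rw [hssq]
      _ ≤ δ^2*bb^2 := hA2
      _ = (δ*bb)^2 := by ring
  have hmul : aa * Real.sqrt (1 - δ^2) ≤ δ * bb := by
    nlinarith [h8, mul_nonneg haa0 hs.le, mul_nonneg hδ0.le hbb0]
  rw [div_mul_eq_mul_div, le_div_iff₀ hs]
  linarith

/-- a set with the `ρ0`-uniform fine weak property or a `ρ0`-uniform
strong Reifenberg property is covered by finitely many Lipschitz graphs over
`j`-dimensional planes. -/
theorem lipschitz_graph_finite_cover (n j : ℕ) (hj : j ≤ n)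
    (A : Set (EuclideanSpace ℝ (Fin n)))
    (hA : RGamma .w .rho0 j Option.none A ∨
      ∃ γ : Option ℝ, memDelta γ ∧ RGamma .s .rho0 j γ A) :
    ∃ (Q : ℕ) (W : Fin Q → Submodule ℝ (EuclideanSpace ℝ (Fin n)))
      (g : ∀ k, (W k) → (W k)ᗮ),
      (∀ k, Module.finrank ℝ (W k) = j) ∧
      (∀ k, ∃ K : ℝ≥0, LipschitzWith K (g k)) ∧
      A ⊆ ⋃ k, lipGraph (W k) (g k) := by
  classical
  by_cases hsub : A.Subsingleton
  · obtain ⟨W0, hW0⟩ := exists_plane n j hj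
    have hcone : ∀ x ∈ A, ∀ z ∈ A,
        ‖(Submodule.orthogonalProjectionOnto W0ᗮ (x - z) : EuclideanSpace ℝ (Fin n))‖ ≤
          1 * ‖(Submodule.orthogonalProjectionOnto W0 (x - z) : EuclideanSpace ℝ (Fin n))‖ := by
      intro x hx z hz
      have hxz : x = z := hsub hx hz
      subst hxz
      simp
    obtain ⟨g0, hK0, hg0⟩ := cone_to_graph W0 A 1 hcone
    refine ⟨1, fun _ => W0, fun _ => g0, fun _ => hW0, fun _ => hK0, ?_⟩
    intro x hx
    exact Set.mem_iUnion.2 ⟨0, hg0 hx⟩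
  · obtain ⟨a, ha, b2, hb2, hab⟩ := Set.not_subsingleton_iff.1 hsub
    have main : (∃ c R, A ⊆ Metric.closedBall c R) ∧ ∃ r > (0:ℝ), ∃ lam : ℝ,
        ∀ y ∈ A, ∃ Wy : Submodule ℝ (EuclideanSpace ℝ (Fin n)), Module.finrank ℝ Wy = j ∧
          ∀ x ∈ A ∩ Metric.closedBall y r, ∀ z ∈ A ∩ Metric.closedBall y r,
            ‖(Submodule.orthogonalProjectionOnto Wyᗮ (x - z) : EuclideanSpace ℝ (Fin n))‖ ≤
              lam * ‖(Submodule.orthogonalProjectionOnto Wy (x - z) : EuclideanSpace ℝ (Fin n))‖ := by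
      rcases hA with hw | ⟨γ, hγ, hs⟩
      · -- weak fine case
        obtain ⟨ρh, hρh, ⟨c, hc⟩, -⟩ := hw (1/2) ⟨by norm_num, by norm_num⟩
        refine ⟨⟨c, ρh, hc⟩, dist a b2 / 2, half_pos (dist_pos.2 hab), 1, ?_⟩
        set r := dist a b2 / 2 with hrdef
        have hr : 0 < r := half_pos (dist_pos.2 hab)
        intro y hy
        have hplane : ∀ m : ℕ, ∃ W : Submodule ℝ (EuclideanSpace ℝ (Fin n)),
            Module.finrank ℝ W = j ∧ ∀ z ∈ A ∩ Metric.closedBall y r,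
              Metric.infDist z (affPlane y W) ≤ (((m : ℝ) + 2))⁻¹ * r := by
          intro m
          have hm2 : (1:ℝ) < (m : ℝ) + 2 := by
            have : (0:ℝ) ≤ (m : ℝ) := Nat.cast_nonneg _
            linarith
          have hδ : (((m : ℝ) + 2))⁻¹ ∈ Set.Ioo (0:ℝ) 1 := by
            constructor
            · positivity
            · rw [inv_lt_one_iff₀]
              right
              exact hm2
          obtain ⟨ρm, hρm, ⟨cm, hcm⟩, hprop⟩ := hw _ hδ
          have hrρ : r ≤ ρm := by
            have h1 : dist a b2 ≤ dist a cm + dist cm b2 := dist_triangle _ _ _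
            have h2 : dist a cm ≤ ρm := hcm ha
            have h3 : dist cm b2 ≤ ρm := by rw [dist_comm]; exact hcm hb2
            rw [hrdef]
            linarith
          obtain ⟨Wm, hWm, hsub2⟩ := hprop y hy r ⟨hr, hrρ⟩
          refine ⟨Wm, hWm, fun z hz => ?_⟩
          exact hsub2 ⟨hz.2, hz.1⟩
        obtain ⟨U, hUrank, hU⟩ := exists_exact_plane j r hr y (A ∩ Metric.closedBall y r) hplane
        refine ⟨U, hUrank, ?_⟩
        intro x hx z hz
        have hxz : x - z ∈ U := by
          have := U.sub_mem (hU x hx) (hU z hz)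
          rwa [sub_sub_sub_cancel_right] at this
        have h0 : Submodule.orthogonalProjectionOnto Uᗮ (x - z) = 0 :=
          Submodule.orthogonalProjectionOnto_apply_of_mem_orthogonal
            (U.le_orthogonal_orthogonal hxz)
        rw [h0]
        simp only [Submodule.coe_zero, norm_zero]
        positivity
      · -- strong case
        have hstrong : ∃ δ ∈ Set.Ioo (0:ℝ) 1, RsRho0 j δ A := by
          rcases hγ with rfl | ⟨d, hd, rfl⟩
          · exact ⟨1/2, ⟨by norm_num, by norm_num⟩, hs (1/2) ⟨by norm_num, by norm_num⟩⟩
          · exact ⟨d, hd, hs⟩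
        obtain ⟨δ, hδIoo, ρ0, hρ0, ⟨c, hc⟩, W0, hW0, hprop⟩ := hstrong
        refine ⟨⟨c, ρ0, hc⟩, ρ0/2, half_pos hρ0, δ / Real.sqrt (1 - δ^2), ?_⟩
        intro y hy
        refine ⟨W0, hW0, ?_⟩
        intro x hx z hz
        have hdist : dist x z ≤ ρ0 := by
          have h1 : dist x y ≤ ρ0/2 := hx.2
          have h2 : dist z y ≤ ρ0/2 := hz.2
          calc dist x z ≤ dist x y + dist y z := dist_triangle _ _ _
            _ ≤ ρ0/2 + ρ0/2 := by rw [dist_comm y z]; exact add_le_add h1 h2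
            _ = ρ0 := by ring
        exact strong_cone hδIoo hρ0 hprop hx.1 hz.1 hdist
    obtain ⟨⟨c, R, hc⟩, r, hr, lam, hkey⟩ := main
    obtain ⟨Q, ycen, hymem, hycov⟩ := finite_cover A c R r hr hc
    choose Wf hWrank hWcone using fun k => hkey (ycen k) (hymem k)
    choose g hKg hgraph using fun k =>
      cone_to_graph (Wf k) (A ∩ Metric.closedBall (ycen k) r) lam (hWcone k)
    refine ⟨Q, Wf, g, hWrank, hKg, ?_⟩
    intro x hx
    obtain ⟨k, hk⟩ := Set.mem_iUnion.1 (hycov hx)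
    exact Set.mem_iUnion.2 ⟨k, hgraph k ⟨hx, hk⟩⟩


end ReifenbergPaper
end
end

section
/- Let n ∈ ℕ, j ≤ n, and suppose A ⊆ ℝⁿ satisfies A ∈ R(w,ρ0,fine;j) or A ∈ R(s,ρ0,γ;j) for some γ ∈ Δ := {fine} ∪ (0,1). Then A is bounded and its upper Minkowski dimension (and hence also its lower Minkowski dimension) is at most j. -/
open Metric Set MeasureTheory ENNReal NNReal

attribute [local instance] Classical.propDecidable

noncomputable section

namespace ReifenbergPaper

/-! ### Auxiliary lemmas for Statement 8 -/

section Aux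

variable {n j : ℕ}

/-- Norm of an orthogonal projection is at most the norm. -/
lemma normP_le (W : Submodule ℝ (EuclideanSpace ℝ (Fin n)))
    (u : EuclideanSpace ℝ (Fin n)) :
    ‖(Submodule.orthogonalProjectionOnto W u : EuclideanSpace ℝ (Fin n))‖ ≤ ‖u‖ := by
  have h := Submodule.norm_sq_eq_add_norm_sq_projection u W
  have h1 : ‖Submodule.orthogonalProjectionOnto W u‖
      = ‖(Submodule.orthogonalProjectionOnto W u : EuclideanSpace ℝ (Fin n))‖ := rfl
  rw [h1] at h
  nlinarith [norm_nonneg (Submodule.orthogonalProjectionOnto W u : EuclideanSpace ℝ (Fin n)), norm_nonneg u,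
    sq_nonneg ‖Submodule.orthogonalProjectionOnto Wᗮ u‖]

/-- Cardinality bound for `ε`-separated sets in a `j`-dimensional affine plane
intersected with a ball of radius `R`. -/
lemma sep_card_le (W : Submodule ℝ (EuclideanSpace ℝ (Fin n)))
    (hW : Module.finrank ℝ W = j) (x : EuclideanSpace ℝ (Fin n)) {R ε : ℝ}
    (hε : 0 < ε) (hR : 0 ≤ R) (F : Finset (EuclideanSpace ℝ (Fin n)))
    (hFT : ∀ p ∈ F, p - x ∈ W ∧ dist p x ≤ R)
    (hsep : ∀ p ∈ F, ∀ q ∈ F, p ≠ q → ε < dist p q) :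
    (F.card : ℝ) ≤ (2*(R+ε)/ε)^j := by
  rcases Nat.eq_zero_or_pos j with hj0 | hjpos
  · subst hj0
    have hbot : W = ⊥ := Submodule.finrank_eq_zero.mp hW
    have hx : ∀ p ∈ F, p = x := by
      intro p hp
      have h := (hFT p hp).1
      rwa [hbot, Submodule.mem_bot, sub_eq_zero] at h
    have hcard : F.card ≤ 1 := Finset.card_le_one.mpr (by
      intro a ha b hb; rw [hx a ha, hx b hb])
    calc (F.card : ℝ) ≤ 1 := by exact_mod_cast hcard
    _ = (2*(R+ε)/ε)^0 := by norm_num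
  · haveI : Nonempty (Fin j) := ⟨⟨0, hjpos⟩⟩
    haveI : Nontrivial (EuclideanSpace ℝ (Fin j)) := by
      refine ⟨EuclideanSpace.single ⟨0, hjpos⟩ (1:ℝ), 0, ?_⟩
      intro hcontra
      have h := congrArg (fun f => f ⟨0, hjpos⟩) hcontra
      simp [EuclideanSpace.single_apply] at h
    set e : W ≃ₗᵢ[ℝ] EuclideanSpace ℝ (Fin j) := ((stdOrthonormalBasis ℝ W).reindex
      (finCongr (by rw [hW]))).repr with he
    set f : {p // p ∈ F} → EuclideanSpace ℝ (Fin j) :=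
      fun p => e ⟨(p : EuclideanSpace ℝ (Fin n)) - x, (hFT _ p.2).1⟩ with hf
    have hdist : ∀ p q : {p // p ∈ F},
        dist (f p) (f q) = dist (p : EuclideanSpace ℝ (Fin n)) (q : EuclideanSpace ℝ (Fin n)) := by
      intro p q
      rw [hf]
      rw [e.dist_map]
      rw [Subtype.dist_eq]
      exact dist_sub_right _ _ _
    have hnormf : ∀ p : {p // p ∈ F}, ‖f p‖ ≤ R := by
      intro p
      rw [hf]
      rw [e.norm_map]
      have h1 : ‖(⟨(p : EuclideanSpace ℝ (Fin n)) - x, (hFT _ p.2).1⟩ : W)‖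
          = ‖(p : EuclideanSpace ℝ (Fin n)) - x‖ := rfl
      rw [h1, ← dist_eq_norm]
      exact (hFT _ p.2).2
    -- volume argument
    have hdisj : (↑(F.attach) : Set {p // p ∈ F}).PairwiseDisjoint
        (fun p => Metric.ball (f p) (ε/2)) := by
      intro p _ q _ hpq
      apply Metric.ball_disjoint_ball
      have hne : (p : EuclideanSpace ℝ (Fin n)) ≠ q := fun h => hpq (Subtype.ext h)
      have := hsep p p.2 q q.2 hne
      rw [← hdist p q] at this
      linarith
    have hmeas := MeasureTheory.measure_biUnion_finset (μ := MeasureTheory.volume) hdisj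
      (fun p _ => measurableSet_ball)
    set v := MeasureTheory.volume (Metric.ball (0 : EuclideanSpace ℝ (Fin j)) 1) with hv
    have hballvol : ∀ p : {p // p ∈ F},
        MeasureTheory.volume (Metric.ball (f p) (ε/2)) = ENNReal.ofReal ((ε/2)^j) * v := by
      intro p
      rw [MeasureTheory.Measure.addHaar_ball MeasureTheory.volume (f p) (by positivity : (0:ℝ) ≤ ε/2),
        finrank_euclideanSpace_fin]
    have hsub : (⋃ p ∈ F.attach, Metric.ball (f p) (ε/2))
        ⊆ Metric.ball (0 : EuclideanSpace ℝ (Fin j)) (R + ε) := by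
      intro y hy
      simp only [Set.mem_iUnion] at hy
      obtain ⟨p, _, hp⟩ := hy
      rw [Metric.mem_ball] at hp ⊢
      calc dist y 0 ≤ dist y (f p) + dist (f p) 0 := dist_triangle _ _ _
      _ < ε/2 + R := by
          have h1 : dist (f p) 0 = ‖f p‖ := by simp
          have := hnormf p
          rw [h1]; linarith
      _ ≤ R + ε := by linarith
    have hbig : MeasureTheory.volume (Metric.ball (0 : EuclideanSpace ℝ (Fin j)) (R + ε))
        = ENNReal.ofReal ((R+ε)^j) * v := by
      rw [MeasureTheory.Measure.addHaar_ball MeasureTheory.volume _ (by positivity : (0:ℝ) ≤ R + ε),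
        finrank_euclideanSpace_fin]
    have hchain : (F.card : ℝ≥0∞) * (ENNReal.ofReal ((ε/2)^j) * v)
        ≤ ENNReal.ofReal ((R+ε)^j) * v := by
      calc (F.card : ℝ≥0∞) * (ENNReal.ofReal ((ε/2)^j) * v)
          = ∑ p ∈ F.attach, MeasureTheory.volume (Metric.ball (f p) (ε/2)) := by
            rw [Finset.sum_congr rfl (fun p _ => hballvol p), Finset.sum_const,
              Finset.card_attach, nsmul_eq_mul]
      _ = MeasureTheory.volume (⋃ p ∈ F.attach, Metric.ball (f p) (ε/2)) := hmeas.symm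
      _ ≤ MeasureTheory.volume (Metric.ball (0 : EuclideanSpace ℝ (Fin j)) (R + ε)) :=
            MeasureTheory.measure_mono hsub
      _ = ENNReal.ofReal ((R+ε)^j) * v := hbig
    have hv0 : v ≠ 0 := (measure_ball_pos MeasureTheory.volume _ one_pos).ne'
    have hvtop : v ≠ ⊤ := measure_ball_lt_top.ne
    have hchain2 : (F.card : ℝ≥0∞) * ENNReal.ofReal ((ε/2)^j) ≤ ENNReal.ofReal ((R+ε)^j) := by
      rw [← mul_assoc] at hchain
      exact (ENNReal.mul_le_mul_iff_left hv0 hvtop).mp hchain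
    have hreal : (F.card : ℝ) * (ε/2)^j ≤ (R+ε)^j := by
      have h1 := ENNReal.toReal_mono ENNReal.ofReal_ne_top hchain2
      rw [ENNReal.toReal_mul,
        (show ((F.card : ℝ≥0∞)).toReal = (F.card:ℝ) from rfl),
        ENNReal.toReal_ofReal (by positivity : (0:ℝ) ≤ (ε/2)^j),
        ENNReal.toReal_ofReal (by positivity : (0:ℝ) ≤ (R+ε)^j)] at h1
      exact h1
    have hpow : (0:ℝ) < (ε/2)^j := by positivity
    rw [← le_div_iff₀ hpow] at hreal
    calc (F.card : ℝ) ≤ (R+ε)^j / (ε/2)^j := hreal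
    _ = (2*(R+ε)/ε)^j := by
        rw [← div_pow]
        congr 1
        field_simp

/-- Existence of an `ε`-net with centres in `T`, of controlled cardinality, for a
set `T` inside a `j`-plane and a ball of radius `R`. -/
lemma net_exists (W : Submodule ℝ (EuclideanSpace ℝ (Fin n)))
    (hW : Module.finrank ℝ W = j) (x : EuclideanSpace ℝ (Fin n)) {R ε : ℝ}
    (hε : 0 < ε) (hR : 0 ≤ R) (T : Set (EuclideanSpace ℝ (Fin n)))
    (hT : ∀ t ∈ T, t - x ∈ W ∧ dist t x ≤ R) :
    ∃ F : Finset (EuclideanSpace ℝ (Fin n)), ↑F ⊆ T ∧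
      (∀ t ∈ T, ∃ p ∈ F, dist t p ≤ ε) ∧ (F.card : ℝ) ≤ (2*(R+ε)/ε)^j := by
  classical
  set P : ℕ → Prop := fun m => ∃ F : Finset (EuclideanSpace ℝ (Fin n)), ↑F ⊆ T ∧
    (∀ p ∈ F, ∀ q ∈ F, p ≠ q → ε < dist p q) ∧ F.card = m with hP
  have hbound : ∀ m, P m → (m : ℝ) ≤ (2*(R+ε)/ε)^j := by
    rintro m ⟨F, hFT, hsep, rfl⟩
    exact sep_card_le W hW x hε hR F (fun p hp => hT p (hFT hp)) hsep
  set N0 : ℕ := ⌈(2*(R+ε)/ε)^j⌉₊ with hN0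
  have hboundN : ∀ m, P m → m ≤ N0 := by
    intro m hm
    have h1 := hbound m hm
    exact_mod_cast h1.trans (Nat.le_ceil _)
  have hP0 : P 0 := ⟨∅, by simp, by simp, rfl⟩
  set m := Nat.findGreatest P N0 with hm
  have hPm : P m := Nat.findGreatest_spec (Nat.zero_le _) hP0
  obtain ⟨F, hFT, hsep, hcard⟩ := hPm
  refine ⟨F, hFT, ?_, by rw [hcard]; exact hbound m ⟨F, hFT, hsep, hcard⟩⟩
  intro t ht
  by_contra hcon
  push_neg at hcon
  have htF : t ∉ F := by
    intro h
    have h2 := hcon t h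
    rw [dist_self] at h2
    linarith
  have hP1 : P (m + 1) := by
    refine ⟨insert t F, ?_, ?_, ?_⟩
    · intro a ha
      rcases Finset.mem_insert.mp ha with rfl | ha
      · exact ht
      · exact hFT ha
    · intro p hp q hq hpq
      rcases Finset.mem_insert.mp hp with rfl | hp'
      · rcases Finset.mem_insert.mp hq with rfl | hq'
        · exact absurd rfl hpq
        · exact hcon q hq'
      · rcases Finset.mem_insert.mp hq with rfl | hq'
        · rw [dist_comm]; exact hcon p hp'
        · exact hsep p hp' q hq' hpq
    · rw [Finset.card_insert_of_notMem htF, hcard]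
  exact Nat.findGreatest_is_greatest (lt_add_one m) (hboundN _ hP1) hP1

/-- If `A` is covered by `G.card` closed balls of radius `r` with `2r ≤ ε`, then
`coverNum A ε ≤ G.card`. -/
lemma coverNum_le_card {A : Set (EuclideanSpace ℝ (Fin n))}
    (G : Finset (EuclideanSpace ℝ (Fin n))) {r ε : ℝ} (hr : 0 ≤ r) (h2 : 2*r ≤ ε)
    (hcov : A ⊆ ⋃ p ∈ G, Metric.closedBall p r) :
    coverNum A ε ≤ (G.card : ℝ≥0∞) := by
  classical
  set s : Finset (Set (EuclideanSpace ℝ (Fin n))) :=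
    G.image (fun p => Metric.closedBall p r) with hs
  have h1 : A ⊆ ⋃ t ∈ s, t := by
    intro a ha
    rcases Set.mem_iUnion₂.mp (hcov ha) with ⟨p, hp, hmem⟩
    exact Set.mem_iUnion₂.mpr ⟨Metric.closedBall p r, by
      simpa [hs] using Finset.mem_image_of_mem (fun p => Metric.closedBall p r) hp, hmem⟩
  have hdiam : ∀ t ∈ s, Metric.diam t ≤ ε := by
    intro t ht
    obtain ⟨p, _, rfl⟩ := Finset.mem_image.mp ht
    exact (Metric.diam_closedBall hr).trans h2
  calc coverNum A ε ≤ (s.card : ℝ≥0∞) := by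
        refine iInf_le_of_le s ?_
        refine iInf_le_of_le h1 ?_
        exact iInf_le _ hdiam
  _ ≤ (G.card : ℝ≥0∞) := by exact_mod_cast Finset.card_image_le

/-- The covering number of a nonempty set is at least one. -/
lemma one_le_coverNum {A : Set (EuclideanSpace ℝ (Fin n))} (hA : A ≠ ∅) (ε : ℝ) :
    1 ≤ coverNum A ε := by
  refine le_iInf fun s => le_iInf fun hcov => le_iInf fun _ => ?_
  rcases Nat.eq_zero_or_pos s.card with h0 | h1
  · exfalso
    rw [Finset.card_eq_zero] at h0
    subst h0
    simp only [Finset.notMem_empty, Set.iUnion_of_empty, Set.iUnion_empty] at hcov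
    exact hA (Set.subset_eq_empty hcov rfl)
  · exact_mod_cast h1

end Aux
section Aux2

variable {n j : ℕ}

/-- Reduction: an eventual covering-number bound gives the Minkowski dimension bounds. -/
lemma dims_le_aux (A : Set (EuclideanSpace ℝ (Fin n)))
    (H : ∀ s : ℝ, (j:ℝ) < s → ∀ᶠ ε in nhdsWithin (0:ℝ) (Set.Ioi 0),
      Real.log ((coverNum A ε).toReal) ≤ s * (-Real.log ε)) :
    upperMinkDim A ≤ j ∧ lowerMinkDim A ≤ j := by
  by_cases hAe : A = ∅
  · constructor <;>
      · simp only [upperMinkDim, lowerMinkDim, if_pos hAe]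
        positivity
  · set f : ℝ → ℝ := fun ε => Real.log ((coverNum A ε).toReal) / (-Real.log ε) with hfdef
    have hsmall : ∀ᶠ ε in nhdsWithin (0:ℝ) (Set.Ioi 0), 0 < ε ∧ ε < 1 := by
      have hmem : Set.Ioo (0:ℝ) 1 ∈ nhdsWithin (0:ℝ) (Set.Ioi 0) :=
        Ioo_mem_nhdsGT_of_mem ⟨le_refl 0, one_pos⟩
      exact Filter.eventually_of_mem hmem fun x hx => ⟨hx.1, hx.2⟩
    have hub : ∀ s : ℝ, (j:ℝ) < s → ∀ᶠ ε in nhdsWithin (0:ℝ) (Set.Ioi 0), f ε ≤ s := by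
      intro s hs
      filter_upwards [H s hs, hsmall] with ε h1 h2
      have hlog : 0 < -Real.log ε := by
        have := Real.log_neg h2.1 h2.2; linarith
      exact (div_le_iff₀ hlog).mpr h1
    have hlb : ∀ᶠ ε in nhdsWithin (0:ℝ) (Set.Ioi 0), 0 ≤ f ε := by
      filter_upwards [hsmall] with ε h2
      have hlog : 0 < -Real.log ε := by
        have := Real.log_neg h2.1 h2.2; linarith
      apply div_nonneg _ hlog.le
      rcases eq_or_ne (coverNum A ε) ⊤ with h | h
      · simp [h]
      · have h1 : 1 ≤ coverNum A ε := one_le_coverNum hAe ε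
        have h2' : (1:ℝ) ≤ (coverNum A ε).toReal := by
          rw [← ENNReal.toReal_one]
          exact ENNReal.toReal_mono h h1
        exact Real.log_nonneg h2'
    have hbddA : Filter.IsBoundedUnder (· ≤ ·) (nhdsWithin (0:ℝ) (Set.Ioi 0)) f := by
      refine ⟨(j:ℝ)+1, ?_⟩
      rw [Filter.eventually_map]
      exact hub ((j:ℝ)+1) (by linarith)
    have hbddB : Filter.IsBoundedUnder (· ≥ ·) (nhdsWithin (0:ℝ) (Set.Ioi 0)) f := by
      refine ⟨0, ?_⟩
      rw [Filter.eventually_map]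
      exact hlb
    have hlimsup : Filter.limsup f (nhdsWithin (0:ℝ) (Set.Ioi 0)) ≤ (j:ℝ) := by
      by_contra hc
      push_neg at hc
      have h1 : Filter.limsup f (nhdsWithin (0:ℝ) (Set.Ioi 0))
          ≤ ((j:ℝ) + Filter.limsup f (nhdsWithin (0:ℝ) (Set.Ioi 0)))/2 :=
        Filter.limsup_le_of_le hbddB.isCoboundedUnder_le (hub _ (by linarith))
      linarith
    have hliminf := Filter.liminf_le_limsup hbddA hbddB
    constructor
    · simp only [upperMinkDim, if_neg hAe]
      exact hlimsup
    · simp only [lowerMinkDim, if_neg hAe]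
      exact hliminf.trans hlimsup

end Aux2

section Aux3

variable {n j : ℕ}

set_option maxHeartbeats 1000000 in
/-- Covering-number bound for sets with the strong `ρ0`-uniform Reifenberg property. -/
lemma strong_H (A : Set (EuclideanSpace ℝ (Fin n))) {δ ρ0 : ℝ}
    (hδ : δ ∈ Set.Ioo (0:ℝ) 1) (hρ0 : 0 < ρ0) (c : EuclideanSpace ℝ (Fin n))
    (hsub : A ⊆ Metric.closedBall c ρ0) (W : Submodule ℝ (EuclideanSpace ℝ (Fin n)))
    (hW : Module.finrank ℝ W = j)
    (hflat : ∀ x ∈ A, ∀ ρ ∈ Set.Ioc (0:ℝ) ρ0,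
      Metric.closedBall x ρ ∩ A ⊆ nbhd (affPlane x W) (δ * ρ)) :
    ∀ s : ℝ, (j:ℝ) < s → ∀ᶠ ε in nhdsWithin (0:ℝ) (Set.Ioi 0),
      Real.log ((coverNum A ε).toReal) ≤ s * (-Real.log ε) := by
  obtain ⟨hδ0, hδ1⟩ := hδ
  set δ' : ℝ := (1+δ)/2 with hδ'def
  have hδ'0 : 0 < δ' := by rw [hδ'def]; linarith
  have hδ'1 : δ' < 1 := by rw [hδ'def]; linarith
  have hδδ' : δ < δ' := by rw [hδ'def]; linarith
  set t := Real.sqrt (1 - δ'^2) with htdef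
  have ht0 : 0 < t := Real.sqrt_pos.mpr (by nlinarith)
  have ht1 : t ≤ 1 := by
    rw [htdef]
    calc Real.sqrt (1 - δ'^2) ≤ Real.sqrt 1 := Real.sqrt_le_sqrt (by nlinarith)
    _ = 1 := Real.sqrt_one
  have key : ∀ x ∈ A, ∀ y ∈ A, dist x y ≤ ρ0 →
      dist x y * t ≤ ‖(Submodule.orthogonalProjectionOnto W (y - x) : EuclideanSpace ℝ (Fin n))‖ := by
    intro x hx y hy hxy
    rcases eq_or_ne x y with rfl | hne
    · simp
    · have hρpos : 0 < dist x y := dist_pos.mpr hne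
      have hyy : y ∈ Metric.closedBall x (dist x y) ∩ A :=
        ⟨Metric.mem_closedBall.mpr (by rw [dist_comm]), hy⟩
      have h1 := hflat x hx (dist x y) ⟨hρpos, hxy⟩ hyy
      have hplane : (affPlane x W).Nonempty := ⟨x, by simp [affPlane]⟩
      have h2 : Metric.infDist y (affPlane x W) < δ' * dist x y := by
        have : δ * dist x y < δ' * dist x y := by nlinarith
        exact lt_of_le_of_lt h1 this
      obtain ⟨z, hzP, hdz⟩ := (Metric.infDist_lt_iff hplane).mp h2
      have hP : Submodule.orthogonalProjectionOnto Wᗮ (y - x) = Submodule.orthogonalProjectionOnto Wᗮ (y - z) := by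
        have hzx : z - x ∈ W := hzP
        have hdecomp : y - x = (y - z) + (z - x) := by abel
        rw [hdecomp, map_add, Submodule.orthogonalProjectionOnto_apply_of_mem_orthogonal
          (W.le_orthogonal_orthogonal hzx), add_zero]
      have hee : ‖(Submodule.orthogonalProjectionOnto Wᗮ (y - x) : EuclideanSpace ℝ (Fin n))‖
          ≤ δ' * dist x y := by
        rw [hP]
        calc ‖(Submodule.orthogonalProjectionOnto Wᗮ (y - z) : EuclideanSpace ℝ (Fin n))‖
            ≤ ‖y - z‖ := normP_le _ _
        _ = dist y z := (dist_eq_norm _ _).symm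
        _ ≤ δ' * dist x y := hdz.le
      have hsq : ‖y - x‖^2 = ‖(Submodule.orthogonalProjectionOnto W (y - x) : EuclideanSpace ℝ (Fin n))‖^2
          + ‖(Submodule.orthogonalProjectionOnto Wᗮ (y - x) : EuclideanSpace ℝ (Fin n))‖^2 :=
        Submodule.norm_sq_eq_add_norm_sq_projection (y - x) W
      have hnormyx : ‖y - x‖ = dist x y := by rw [← dist_eq_norm, dist_comm]
      have hb0 : 0 ≤ ‖(Submodule.orthogonalProjectionOnto W (y - x) : EuclideanSpace ℝ (Fin n))‖ :=
        norm_nonneg _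
      have hsqle : (dist x y * t)^2
          ≤ ‖(Submodule.orthogonalProjectionOnto W (y - x) : EuclideanSpace ℝ (Fin n))‖^2 := by
        have ht2 : t^2 = 1 - δ'^2 := Real.sq_sqrt (by nlinarith)
        have hee2 : ‖(Submodule.orthogonalProjectionOnto Wᗮ (y - x) : EuclideanSpace ℝ (Fin n))‖^2
            ≤ (δ' * dist x y)^2 :=
          pow_le_pow_left₀ (norm_nonneg _) hee 2
        rw [hnormyx] at hsq
        nlinarith [hee2, hsq, ht2]
      have hab : dist x y * t = Real.sqrt ((dist x y * t)^2) :=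
        (Real.sqrt_sq (mul_nonneg dist_nonneg ht0.le)).symm
      rw [hab, ← Real.sqrt_sq hb0]
      exact Real.sqrt_le_sqrt hsqle
  intro s hs
  have hs0 : (0:ℝ) < s := lt_of_le_of_lt (Nat.cast_nonneg j) hs
  have hsj : (0:ℝ) < s - j := by linarith
  -- base net
  have htop : Module.finrank ℝ (⊤ : Submodule ℝ (EuclideanSpace ℝ (Fin n))) = n := by
    rw [finrank_top]; exact finrank_euclideanSpace_fin
  obtain ⟨F0, hF0A, hF0net, hF0card⟩ := net_exists (⊤ : Submodule ℝ _) htop c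
    (R := ρ0) (ε := ρ0/2) (by positivity) hρ0.le A
    (fun z hz => ⟨Submodule.mem_top, Metric.mem_closedBall.mp (hsub hz)⟩)
  have hK0 : (F0.card : ℝ) ≤ 6^n := by
    have h6 : 2*(ρ0+ρ0/2)/(ρ0/2) = 6 := by field_simp; ring
    rwa [h6] at hF0card
  set C2 := 4*ρ0/t + 2*ρ0 with hC2def
  have hC2pos : 0 < C2 := by positivity
  set C3 := (n:ℝ) * Real.log 6 + (j:ℝ) * Real.log C2 with hC3def
  set m' := min ρ0 (min 1 (Real.exp (-(C3/(s - j))))) with hm'def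
  have hm'pos : 0 < m' := lt_min hρ0 (lt_min one_pos (Real.exp_pos _))
  have hmem : Set.Ioo (0:ℝ) m' ∈ nhdsWithin (0:ℝ) (Set.Ioi 0) :=
    Ioo_mem_nhdsGT_of_mem ⟨le_refl 0, hm'pos⟩
  filter_upwards [Filter.eventually_of_mem hmem fun x hx => hx] with ε hε
  obtain ⟨hε0, hεm⟩ := hε
  have hερ0 : ε ≤ ρ0 := le_of_lt (lt_of_lt_of_le hεm (min_le_left _ _))
  have hε1 : ε < 1 := lt_of_lt_of_le hεm ((min_le_right _ _).trans (min_le_left _ _))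
  have hεexp : ε ≤ Real.exp (-(C3/(s - j))) :=
    le_of_lt (lt_of_lt_of_le hεm ((min_le_right _ _).trans (min_le_right _ _)))
  set η := ε * t / 2 with hηdef
  have hηpos : 0 < η := by positivity
  -- per-piece nets
  have step : ∀ a ∈ F0, ∃ Ga : Finset (EuclideanSpace ℝ (Fin n)),
      (Ga.card : ℝ) ≤ (2*(ρ0+η)/η)^j ∧
        Metric.closedBall a (ρ0/2) ∩ A ⊆ ⋃ g ∈ Ga, Metric.closedBall g (ε/2) := by
    intro a haF0
    set S := Metric.closedBall a (ρ0/2) ∩ A with hSdef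
    set π : EuclideanSpace ℝ (Fin n) → EuclideanSpace ℝ (Fin n) :=
      fun y => a + (Submodule.orthogonalProjectionOnto W (y - a) : EuclideanSpace ℝ (Fin n)) with hπdef
    have hTsub : ∀ z ∈ π '' S, z - a ∈ W ∧ dist z a ≤ ρ0 := by
      rintro z ⟨y, hy, rfl⟩
      have hza : π y - a = (Submodule.orthogonalProjectionOnto W (y - a) : EuclideanSpace ℝ (Fin n)) := by
        simp only [hπdef]
        exact add_sub_cancel_left a _
      constructor
      · rw [hza]; exact SetLike.coe_mem _
      · rw [dist_eq_norm, hza]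
        calc ‖(Submodule.orthogonalProjectionOnto W (y - a) : EuclideanSpace ℝ (Fin n))‖
            ≤ ‖y - a‖ := normP_le _ _
        _ = dist y a := (dist_eq_norm _ _).symm
        _ ≤ ρ0/2 := Metric.mem_closedBall.mp hy.1
        _ ≤ ρ0 := by linarith
    obtain ⟨Fa, hFaT, hFanet, hFacard⟩ := net_exists W hW a (R := ρ0) (ε := η)
      hηpos hρ0.le (π '' S) hTsub
    have hpre : ∀ p ∈ Fa, ∃ y, y ∈ S ∧ π y = p := by
      intro p hp
      obtain ⟨y, hy, hyp⟩ := hFaT hp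
      exact ⟨y, hy, hyp⟩
    choose ψ hψS hψπ using hpre
    refine ⟨Fa.attach.image (fun p => ψ p.1 p.2), ?_, ?_⟩
    · calc ((Fa.attach.image (fun p => ψ p.1 p.2)).card : ℝ)
          ≤ (Fa.attach.card : ℝ) := Nat.cast_le.mpr Finset.card_image_le
      _ = (Fa.card : ℝ) := by rw [Finset.card_attach]
      _ ≤ _ := hFacard
    · intro y hyS
      have hzT : π y ∈ π '' S := Set.mem_image_of_mem _ hyS
      obtain ⟨p, hpFa, hdp⟩ := hFanet _ hzT
      have hy'S : ψ p hpFa ∈ S := hψS p hpFa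
      have hdyy' : dist y (ψ p hpFa) ≤ ρ0 := by
        calc dist y (ψ p hpFa) ≤ dist y a + dist a (ψ p hpFa) := dist_triangle _ _ _
        _ ≤ ρ0/2 + ρ0/2 := by
            have h1 := Metric.mem_closedBall.mp hyS.1
            have h2 := Metric.mem_closedBall.mp hy'S.1
            rw [dist_comm a _]
            linarith
        _ = ρ0 := by ring
      have hkey := key y hyS.2 (ψ p hpFa) hy'S.2 hdyy'
      have hPexpr : ‖(Submodule.orthogonalProjectionOnto W (ψ p hpFa - y) : EuclideanSpace ℝ (Fin n))‖
          = dist (π (ψ p hpFa)) (π y) := by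
        have h4 : Submodule.orthogonalProjectionOnto W (ψ p hpFa - y)
            = Submodule.orthogonalProjectionOnto W (ψ p hpFa - a) - Submodule.orthogonalProjectionOnto W (y - a) := by
          rw [show ψ p hpFa - y = (ψ p hpFa - a) - (y - a) by abel, map_sub]
        have h5 : π (ψ p hpFa) - π y = (Submodule.orthogonalProjectionOnto W (ψ p hpFa - a)
            : EuclideanSpace ℝ (Fin n)) - (Submodule.orthogonalProjectionOnto W (y - a)
            : EuclideanSpace ℝ (Fin n)) := by
          rw [hπdef]; beta_reduce; abel
        rw [dist_eq_norm, h4, h5]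
        norm_cast
      have hdistyp : dist y (ψ p hpFa) * t ≤ η := by
        rw [hPexpr] at hkey
        have h6 : dist (π (ψ p hpFa)) (π y) = dist (π y) p := by
          rw [hψπ p hpFa, dist_comm]
        rw [h6] at hkey
        exact hkey.trans hdp
      have hfinal : dist y (ψ p hpFa) ≤ ε/2 := by
        rw [hηdef] at hdistyp
        nlinarith [ht0]
      exact Set.mem_iUnion₂.mpr ⟨ψ p hpFa,
        Finset.mem_image.mpr ⟨⟨p, hpFa⟩, Finset.mem_attach _ _, rfl⟩,
        Metric.mem_closedBall.mpr hfinal⟩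
  choose Gfun hGcard hGcov using step
  set G := F0.attach.biUnion (fun a => Gfun a.1 a.2) with hGdef
  have hcovA : A ⊆ ⋃ g ∈ G, Metric.closedBall g (ε/2) := by
    intro y hyA
    obtain ⟨a, haF0, hda⟩ := hF0net y hyA
    have hyS : y ∈ Metric.closedBall a (ρ0/2) ∩ A := ⟨Metric.mem_closedBall.mpr hda, hyA⟩
    obtain ⟨g, hgGa, hyg⟩ := Set.mem_iUnion₂.mp (hGcov a haF0 hyS)
    exact Set.mem_iUnion₂.mpr ⟨g,
      Finset.mem_biUnion.mpr ⟨⟨a, haF0⟩, Finset.mem_attach _ _, hgGa⟩, hyg⟩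
  have hNle : coverNum A ε ≤ (G.card : ℝ≥0∞) :=
    coverNum_le_card G (by positivity) (by linarith) hcovA
  have hGcardR : (G.card : ℝ) ≤ 6^n * (2*(ρ0+η)/η)^j := by
    calc (G.card : ℝ) ≤ ∑ a ∈ F0.attach, ((Gfun a.1 a.2).card : ℝ) := by
          exact_mod_cast Finset.card_biUnion_le
    _ ≤ ∑ _a ∈ F0.attach, (2*(ρ0+η)/η)^j :=
          Finset.sum_le_sum (fun a _ => hGcard a.1 a.2)
    _ = (F0.card : ℝ) * (2*(ρ0+η)/η)^j := by
          rw [Finset.sum_const, Finset.card_attach, nsmul_eq_mul]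
    _ ≤ 6^n * (2*(ρ0+η)/η)^j := by
          apply mul_le_mul_of_nonneg_right hK0 (by positivity)
  have hNtoReal : (coverNum A ε).toReal ≤ 6^n * (2*(ρ0+η)/η)^j := by
    have h1 : (coverNum A ε).toReal ≤ ((G.card : ℝ≥0∞)).toReal :=
      ENNReal.toReal_mono (ENNReal.natCast_ne_top _) hNle
    exact le_trans h1 hGcardR
  have hquot : 2*(ρ0+η)/η ≤ C2/ε := by
    rw [hηdef, hC2def, div_le_div_iff₀ (by positivity) hε0]
    have hexp : 2*(ρ0 + ε*t/2)*ε ≤ (4*ρ0/t + 2*ρ0)*(ε*t/2) := by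
      have h7 : 4*ρ0/t*(ε*t/2) = 2*ρ0*ε := by field_simp; ring
      have h8 : (4*ρ0/t + 2*ρ0)*(ε*t/2) = 2*ρ0*ε + ρ0*ε*t := by
        rw [add_mul, h7]; ring
      rw [h8]
      nlinarith [hε0, ht0, hερ0]
    exact hexp
  have hquot2 : (2:ℝ) ≤ 2*(ρ0+η)/η := by
    rw [le_div_iff₀ hηpos]
    nlinarith [hρ0, hηpos]
  have hC2ε1 : (1:ℝ) ≤ C2/ε := by linarith
  have hBd1 : (1:ℝ) ≤ 6^n * (C2/ε)^j := by
    have h9 : (1:ℝ) ≤ (6:ℝ)^n := one_le_pow₀ (by norm_num)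
    have h10 : (1:ℝ) ≤ (C2/ε)^j := one_le_pow₀ hC2ε1
    nlinarith
  have hNBd : (coverNum A ε).toReal ≤ 6^n * (C2/ε)^j := by
    refine hNtoReal.trans ?_
    apply mul_le_mul_of_nonneg_left _ (by positivity)
    exact pow_le_pow_left₀ (by positivity) hquot j
  have hlogN : Real.log ((coverNum A ε).toReal)
      ≤ (n:ℝ) * Real.log 6 + (j:ℝ) * (Real.log C2 - Real.log ε) := by
    have hlog1 : Real.log ((coverNum A ε).toReal) ≤ Real.log (6^n * (C2/ε)^j) := by
      by_cases h0 : (coverNum A ε).toReal = 0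
      · rw [h0, Real.log_zero]
        exact Real.log_nonneg hBd1
      · exact Real.log_le_log (lt_of_le_of_ne ENNReal.toReal_nonneg (Ne.symm h0)) hNBd
    rw [Real.log_mul (by positivity) (by positivity), Real.log_pow, Real.log_pow,
      Real.log_div (ne_of_gt hC2pos) (ne_of_gt hε0)] at hlog1
    exact hlog1
  have hεlog : Real.log ε ≤ -(C3/(s - j)) := by
    calc Real.log ε ≤ Real.log (Real.exp (-(C3/(s - j)))) := Real.log_le_log hε0 hεexp
    _ = -(C3/(s - j)) := Real.log_exp _
  have h5 : C3 ≤ (s - (j:ℝ)) * (-Real.log ε) := by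
    have h6 : C3/(s-j) ≤ -Real.log ε := by linarith
    calc C3 = (s - (j:ℝ)) * (C3/(s-j)) := by field_simp
    _ ≤ (s - (j:ℝ)) * (-Real.log ε) := by
        apply mul_le_mul_of_nonneg_left h6 hsj.le
  calc Real.log ((coverNum A ε).toReal)
      ≤ (n:ℝ) * Real.log 6 + (j:ℝ) * (Real.log C2 - Real.log ε) := hlogN
  _ = C3 + (j:ℝ) * (-Real.log ε) := by rw [hC3def]; ring
  _ ≤ (s - (j:ℝ)) * (-Real.log ε) + (j:ℝ) * (-Real.log ε) := by linarith
  _ = s * (-Real.log ε) := by ring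

end Aux3
section Aux4

variable {n j : ℕ}

set_option maxHeartbeats 1000000 in
/-- Covering-number bound for sets with the fine weak `ρ0`-uniform property. -/
lemma weak_H (A : Set (EuclideanSpace ℝ (Fin n)))
    (h : ∀ δ ∈ Set.Ioo (0:ℝ) 1, RwRho0 j δ A) :
    ∀ s : ℝ, (j:ℝ) < s → ∀ᶠ ε in nhdsWithin (0:ℝ) (Set.Ioi 0),
      Real.log ((coverNum A ε).toReal) ≤ s * (-Real.log ε) := by
  intro s hs
  have hs0 : (0:ℝ) < s := lt_of_le_of_lt (Nat.cast_nonneg j) hs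
  have hsj : (0:ℝ) < s - j := by linarith
  obtain ⟨m1, hm1⟩ := exists_nat_gt ((s + j)/(s - j))
  set m : ℕ := m1 + 2 with hmdef
  have hm2 : 2 ≤ m := by omega
  have hmr : (s + j)/(s - j) < m := by
    refine lt_of_lt_of_le hm1 ?_
    exact_mod_cast Nat.le_add_right m1 2
  set δ : ℝ := ((6:ℝ)^m)⁻¹ with hδdef
  have h6m : (1:ℝ) < 6^m := one_lt_pow₀ (by norm_num) (by omega)
  have hδ0 : 0 < δ := by rw [hδdef]; positivity
  have hδ1 : δ < 1 := by rw [hδdef]; exact inv_lt_one_of_one_lt₀ h6m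
  have hδsmall : δ ≤ 1/36 := by
    rw [hδdef]
    have h36 : (36:ℝ) ≤ 6^m := by
      calc (36:ℝ) = 6^2 := by norm_num
      _ ≤ 6^m := pow_le_pow_right₀ (by norm_num) hm2
    rw [inv_le_comm₀ (by positivity) (by norm_num)]
    linarith
  obtain ⟨ρ0, hρ0, ⟨c, hsub⟩, hflat⟩ := h δ ⟨hδ0, hδ1⟩
  set κ : ℝ := 6*δ with hκdef
  have hκ0 : 0 < κ := by rw [hκdef]; positivity
  have hκ16 : κ ≤ 1/6 := by rw [hκdef]; linarith
  have hκ1 : κ < 1 := by linarith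
  set M : ℝ := (6/δ)^j with hMdef
  have h6δ : (1:ℝ) ≤ 6/δ := by
    rw [le_div_iff₀ hδ0]; linarith
  have hM1 : (1:ℝ) ≤ M := by
    rw [hMdef]
    calc (1:ℝ) = 1^j := (one_pow j).symm
    _ ≤ (6/δ)^j := pow_le_pow_left₀ (by norm_num) h6δ j
  -- one covering step
  have hstep : ∀ x ρ, ∃ G : Finset (EuclideanSpace ℝ (Fin n)), x ∈ A →
      ρ ∈ Set.Ioc (0:ℝ) ρ0 → (↑G ⊆ A ∧ (G.card : ℝ) ≤ M ∧
        Metric.closedBall x ρ ∩ A ⊆ ⋃ b ∈ G, Metric.closedBall b (κ*ρ)) := by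
    intro x ρ
    by_cases hx : x ∈ A ∧ ρ ∈ Set.Ioc (0:ℝ) ρ0
    · obtain ⟨hxA, hρpos, hρle⟩ := hx
      obtain ⟨W, hW, hWflat⟩ := hflat x hxA ρ ⟨hρpos, hρle⟩
      obtain ⟨F, hFT, hFnet, hFcard⟩ := net_exists W hW x (R := 2*ρ) (ε := δ*ρ)
        (by positivity) (by positivity)
        (affPlane x W ∩ Metric.closedBall x (2*ρ))
        (fun z hz => ⟨hz.1, Metric.mem_closedBall.mp hz.2⟩)
      have hch : ∀ p : EuclideanSpace ℝ (Fin n), ∃ b, b ∈ A ∧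
          ∀ y, y ∈ A → dist y p ≤ 3*(δ*ρ) → dist y b ≤ κ*ρ := by
        intro p
        by_cases hne : ∃ y0, y0 ∈ A ∧ dist y0 p ≤ 3*(δ*ρ)
        · obtain ⟨y0, hy0A, hy0⟩ := hne
          refine ⟨y0, hy0A, fun y hyA hyp => ?_⟩
          calc dist y y0 ≤ dist y p + dist p y0 := dist_triangle _ _ _
          _ ≤ 3*(δ*ρ) + 3*(δ*ρ) := by rw [dist_comm p y0]; linarith
          _ = κ*ρ := by rw [hκdef]; ring
        · push_neg at hne
          exact ⟨x, hxA, fun y hyA hyp => absurd hyp (not_le.mpr (hne y hyA))⟩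
      choose bf hbA hbprop using hch
      refine ⟨F.image bf, fun _ _ => ⟨?_, ?_, ?_⟩⟩
      · intro b hb
        obtain ⟨p, hp, rfl⟩ := Finset.mem_image.mp hb
        exact hbA p
      · calc ((F.image bf).card : ℝ) ≤ (F.card : ℝ) := by exact_mod_cast Finset.card_image_le
        _ ≤ (2*(2*ρ+δ*ρ)/(δ*ρ))^j := hFcard
        _ ≤ M := by
            rw [hMdef]
            apply pow_le_pow_left₀ (by positivity)
            rw [div_le_div_iff₀ (by positivity) hδ0]
            nlinarith [mul_nonneg (mul_nonneg (by linarith : (0:ℝ) ≤ 1-δ) hδ0.le) hρpos.le]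
      · intro y hy
        obtain ⟨hyball, hyA⟩ := hy
        have h1 : Metric.infDist y (affPlane x W) ≤ δ*ρ := hWflat ⟨hyball, hyA⟩
        have hplane : (affPlane x W).Nonempty := ⟨x, by simp [affPlane]⟩
        have h2 : Metric.infDist y (affPlane x W) < (3/2)*(δ*ρ) := by
          refine lt_of_le_of_lt h1 ?_
          nlinarith [hδ0, hρpos]
        obtain ⟨z, hzP, hdz⟩ := (Metric.infDist_lt_iff hplane).mp h2
        have hzball : z ∈ Metric.closedBall x (2*ρ) := by
          rw [Metric.mem_closedBall]
          have hyx := Metric.mem_closedBall.mp hyball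
          calc dist z x ≤ dist z y + dist y x := dist_triangle _ _ _
          _ ≤ (3/2)*(δ*ρ) + ρ := by
              rw [dist_comm z y]; linarith
          _ ≤ 2*ρ := by nlinarith [hρpos, hδsmall, hδ0]
        obtain ⟨p, hpF, hdp⟩ := hFnet z ⟨hzP, hzball⟩
        have hyp : dist y p ≤ 3*(δ*ρ) := by
          calc dist y p ≤ dist y z + dist z p := dist_triangle _ _ _
          _ ≤ (3/2)*(δ*ρ) + δ*ρ := by linarith
          _ ≤ 3*(δ*ρ) := by nlinarith [hδ0, hρpos]
        exact Set.mem_iUnion₂.mpr ⟨bf p, Finset.mem_image_of_mem bf hpF,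
          Metric.mem_closedBall.mpr (hbprop p y hyA hyp)⟩
    · exact ⟨∅, fun h1 h2 => absurd ⟨h1, h2⟩ hx⟩
  choose g hg using hstep
  -- iteration
  have htop : Module.finrank ℝ (⊤ : Submodule ℝ (EuclideanSpace ℝ (Fin n))) = n := by
    rw [finrank_top]; exact finrank_euclideanSpace_fin
  have iter : ∀ k : ℕ, ∃ G : Finset (EuclideanSpace ℝ (Fin n)), ↑G ⊆ A ∧
      (G.card : ℝ) ≤ 4^n * M^k ∧ A ⊆ ⋃ b ∈ G, Metric.closedBall b (κ^k * ρ0) := by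
    intro k
    induction k with
    | zero =>
      obtain ⟨F0, hF0A, hF0net, hF0card⟩ := net_exists (⊤ : Submodule ℝ _) htop c
        (R := ρ0) (ε := ρ0) hρ0 hρ0.le A
        (fun z hz => ⟨Submodule.mem_top, Metric.mem_closedBall.mp (hsub hz)⟩)
      refine ⟨F0, hF0A, ?_, ?_⟩
      · calc (F0.card : ℝ) ≤ (2*(ρ0+ρ0)/ρ0)^n := hF0card
        _ = 4^n := by congr 1; field_simp; ring
        _ ≤ 4^n * M^0 := by simp
      · intro y hy
        obtain ⟨p, hpF, hdp⟩ := hF0net y hy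
        refine Set.mem_iUnion₂.mpr ⟨p, hpF, Metric.mem_closedBall.mpr ?_⟩
        simpa using hdp
    | succ k ih =>
      obtain ⟨G, hGA, hGcard, hGcov⟩ := ih
      have hκk1 : κ^k ≤ 1 := pow_le_one₀ hκ0.le hκ1.le
      have hρkIoc : κ^k * ρ0 ∈ Set.Ioc (0:ℝ) ρ0 := by
        constructor
        · positivity
        · calc κ^k * ρ0 ≤ 1 * ρ0 := mul_le_mul_of_nonneg_right hκk1 hρ0.le
          _ = ρ0 := one_mul _
      refine ⟨G.attach.biUnion (fun a => g a.1 (κ^k * ρ0)), ?_, ?_, ?_⟩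
      · intro b hb
        obtain ⟨a, _, hbga⟩ := Finset.mem_biUnion.mp hb
        exact (hg a.1 (κ^k * ρ0) (hGA a.2) hρkIoc).1 hbga
      · calc ((G.attach.biUnion (fun a => g a.1 (κ^k * ρ0))).card : ℝ)
            ≤ ∑ a ∈ G.attach, ((g a.1 (κ^k * ρ0)).card : ℝ) := by
              exact_mod_cast Finset.card_biUnion_le
        _ ≤ ∑ _a ∈ G.attach, M :=
              Finset.sum_le_sum (fun a _ => (hg a.1 (κ^k * ρ0) (hGA a.2) hρkIoc).2.1)
        _ = (G.card : ℝ) * M := by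
              rw [Finset.sum_const, Finset.card_attach, nsmul_eq_mul]
        _ ≤ (4^n * M^k) * M := by
              apply mul_le_mul_of_nonneg_right hGcard (by linarith)
        _ = 4^n * M^(k+1) := by rw [pow_succ]; ring
      · intro y hy
        obtain ⟨a, haG, hya⟩ := Set.mem_iUnion₂.mp (hGcov hy)
        have hyin : y ∈ Metric.closedBall a (κ^k * ρ0) ∩ A := ⟨hya, hy⟩
        obtain ⟨b, hbga, hyb⟩ := Set.mem_iUnion₂.mp
          ((hg a (κ^k * ρ0) (hGA haG) hρkIoc).2.2 hyin)
        refine Set.mem_iUnion₂.mpr ⟨b,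
          Finset.mem_biUnion.mpr ⟨⟨a, haG⟩, Finset.mem_attach _ _, hbga⟩, ?_⟩
        rw [Metric.mem_closedBall] at hyb ⊢
        calc dist y b ≤ κ * (κ^k * ρ0) := hyb
        _ = κ^(k+1) * ρ0 := by rw [pow_succ]; ring
  -- choice of k0 and conclusion
  set L : ℝ := ((m:ℝ) - 1) * Real.log 6 with hLdef
  have h6log : (0:ℝ) < Real.log 6 := Real.log_pos (by norm_num)
  have hlogM : Real.log M = (j:ℝ) * (((m:ℝ)+1) * Real.log 6) := by
    rw [hMdef, Real.log_pow]
    congr 1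
    rw [Real.log_div (by norm_num) (ne_of_gt hδ0), hδdef, Real.log_inv, Real.log_pow]
    ring
  have hlogκ : Real.log κ = -L := by
    rw [hκdef, Real.log_mul (by norm_num) (ne_of_gt hδ0), hδdef, Real.log_inv,
      Real.log_pow, hLdef]
    ring
  have hL0 : 0 < L := by
    rw [hLdef]
    apply mul_pos _ h6log
    have : (2:ℝ) ≤ (m:ℝ) := by exact_mod_cast hm2
    linarith
  have hmm : (s + j) < (m:ℝ) * (s - j) := by
    rw [div_lt_iff₀ hsj] at hmr
    linarith
  have hD : 0 < s * L - Real.log M := by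
    rw [hlogM, hLdef]
    nlinarith [h6log, hmm]
  set D : ℝ := s * L - Real.log M with hDdef
  set C0 : ℝ := Real.log (2*ρ0) with hC0def
  have hK0pos : (0:ℝ) < 4^n := by positivity
  obtain ⟨k0, hk0⟩ := exists_nat_ge (((n:ℝ) * Real.log 4 + Real.log M + s*C0)/D)
  set m' := min 1 (2*ρ0*κ^(k0+1)) with hm'def
  have hm'pos : 0 < m' := lt_min one_pos (by positivity)
  have hmem : Set.Ioo (0:ℝ) m' ∈ nhdsWithin (0:ℝ) (Set.Ioi 0) :=
    Ioo_mem_nhdsGT_of_mem ⟨le_refl 0, hm'pos⟩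
  filter_upwards [Filter.eventually_of_mem hmem fun x hx => hx] with ε hε
  obtain ⟨hε0, hεm'⟩ := hε
  have hPex : ∃ i : ℕ, 2*ρ0*κ^(i+1) < ε := by
    obtain ⟨i, hi⟩ := exists_pow_lt_of_lt_one (x := ε/(2*ρ0)) (by positivity) hκ1
    refine ⟨i, ?_⟩
    have h2 : κ^(i+1) ≤ κ^i := pow_le_pow_of_le_one hκ0.le hκ1.le (by omega)
    have h3 : κ^(i+1) < ε/(2*ρ0) := lt_of_le_of_lt h2 hi
    calc 2*ρ0*κ^(i+1) < 2*ρ0*(ε/(2*ρ0)) := by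
          apply mul_lt_mul_of_pos_left h3 (by positivity)
    _ = ε := by field_simp
  set k := Nat.find hPex with hkdef
  have hkP : 2*ρ0*κ^(k+1) < ε := Nat.find_spec hPex
  have hkk0 : k0 < k := by
    by_contra hcon
    push_neg at hcon
    have h2 : ε < 2*ρ0*κ^(k0+1) := lt_of_lt_of_le hεm' (min_le_right _ _)
    have h3 : 2*ρ0*κ^(k0+1) ≤ 2*ρ0*κ^(k+1) := by
      apply mul_le_mul_of_nonneg_left _ (by positivity)
      exact pow_le_pow_of_le_one hκ0.le hκ1.le (by omega)
    linarith
  have hkpos : 0 < k := lt_of_le_of_lt (Nat.zero_le k0) hkk0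
  have hεk : ε ≤ 2*ρ0*κ^k := by
    obtain ⟨k', hk'⟩ : ∃ k', k = k' + 1 := ⟨k-1, (Nat.succ_pred_eq_of_pos hkpos).symm⟩
    have h4 := Nat.find_min hPex (m := k') (by omega)
    rw [← hk'] at h4
    exact not_lt.mp h4
  obtain ⟨G, hGA, hGcard, hGcov⟩ := iter (k+1)
  have h2r : 2*(κ^(k+1) * ρ0) ≤ ε := by
    calc 2*(κ^(k+1) * ρ0) = 2*ρ0*κ^(k+1) := by ring
    _ ≤ ε := hkP.le
  have hNle : coverNum A ε ≤ (G.card : ℝ≥0∞) :=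
    coverNum_le_card G (by positivity) h2r hGcov
  have hNtoReal : (coverNum A ε).toReal ≤ 4^n * M^(k+1) := by
    have h1 : (coverNum A ε).toReal ≤ ((G.card : ℝ≥0∞)).toReal :=
      ENNReal.toReal_mono (ENNReal.natCast_ne_top _) hNle
    exact le_trans h1 hGcard
  have hBd1 : (1:ℝ) ≤ 4^n * M^(k+1) := by
    have h9 : (1:ℝ) ≤ (4:ℝ)^n := one_le_pow₀ (by norm_num)
    have h10 : (1:ℝ) ≤ M^(k+1) := one_le_pow₀ hM1
    nlinarith
  have hlogN : Real.log ((coverNum A ε).toReal)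
      ≤ (n:ℝ) * Real.log 4 + ((k:ℝ)+1) * Real.log M := by
    have hlog1 : Real.log ((coverNum A ε).toReal) ≤ Real.log (4^n * M^(k+1)) := by
      by_cases h0 : (coverNum A ε).toReal = 0
      · rw [h0, Real.log_zero]
        exact Real.log_nonneg hBd1
      · exact Real.log_le_log (lt_of_le_of_ne ENNReal.toReal_nonneg (Ne.symm h0)) hNtoReal
    rw [Real.log_mul (by positivity) (by positivity), Real.log_pow, Real.log_pow] at hlog1
    calc Real.log ((coverNum A ε).toReal)
        ≤ ((n:ℕ):ℝ) * Real.log 4 + ((k+1 : ℕ):ℝ) * Real.log M := by exact_mod_cast hlog1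
    _ = (n:ℝ) * Real.log 4 + ((k:ℝ)+1) * Real.log M := by push_cast; ring
  have hεlog : (k:ℝ)*L - C0 ≤ -Real.log ε := by
    have h1 : Real.log ε ≤ Real.log (2*ρ0*κ^k) := Real.log_le_log hε0 hεk
    rw [Real.log_mul (by positivity) (by positivity), Real.log_pow, hlogκ, ← hC0def] at h1
    have : Real.log ε ≤ C0 + (k:ℝ) * (-L) := h1
    linarith
  have hkD : (n:ℝ) * Real.log 4 + Real.log M + s*C0 ≤ (k:ℝ)*D := by
    have h2 : (((n:ℝ) * Real.log 4 + Real.log M + s*C0)/D) ≤ (k0:ℝ) := hk0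
    have h3 : (k0:ℝ) ≤ (k:ℝ) := by exact_mod_cast hkk0.le
    rw [div_le_iff₀ hD] at h2
    nlinarith [hD]
  have hfinal : (n:ℝ) * Real.log 4 + ((k:ℝ)+1)*Real.log M ≤ s * ((k:ℝ)*L - C0) := by
    rw [hDdef] at hkD
    nlinarith [hkD]
  calc Real.log ((coverNum A ε).toReal)
      ≤ (n:ℝ) * Real.log 4 + ((k:ℝ)+1)*Real.log M := hlogN
  _ ≤ s * ((k:ℝ)*L - C0) := hfinal
  _ ≤ s * (-Real.log ε) := mul_le_mul_of_nonneg_left hεlog hs0.le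

end Aux4
/-- a set with the `ρ0`-uniform fine weak property or a `ρ0`-uniform
strong Reifenberg property is bounded and has upper (hence lower) Minkowski
dimension at most `j`. -/
theorem minkowski_dim_le (n j : ℕ) (hj : j ≤ n) (A : Set (EuclideanSpace ℝ (Fin n)))
    (hA : RGamma .w .rho0 j Option.none A ∨
      ∃ γ : Option ℝ, memDelta γ ∧ RGamma .s .rho0 j γ A) :
    Bornology.IsBounded A ∧ upperMinkDim A ≤ j ∧ lowerMinkDim A ≤ j := by
  rcases hA with h | ⟨γ, hγ, h⟩
  · obtain ⟨ρ0, hρ0, ⟨c, hsub⟩, -⟩ := h (1/2) ⟨by norm_num, by norm_num⟩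
    have hdims := dims_le_aux A (weak_H A h)
    exact ⟨Metric.isBounded_closedBall.subset hsub, hdims.1, hdims.2⟩
  · have hstr : ∃ δ ∈ Set.Ioo (0:ℝ) 1, RsRho0 j δ A := by
      rcases hγ with rfl | ⟨d, hd, rfl⟩
      · exact ⟨1/2, ⟨by norm_num, by norm_num⟩, h (1/2) ⟨by norm_num, by norm_num⟩⟩
      · exact ⟨d, hd, h⟩
    obtain ⟨δ, hδmem, ρ0, hρ0, ⟨c, hsub⟩, W, hW, hflat⟩ := hstr
    have hdims := dims_le_aux A (strong_H A hδmem hρ0 c hsub W hW hflat)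
    exact ⟨Metric.isBounded_closedBall.subset hsub, hdims.1, hdims.2⟩

end ReifenbergPaper
end
end

section
/- Let j ∈ ℕ, j ≥ 1, and let N_j := ⋃_{i=1}^{∞} {i^{-1}} × [0,1]^j ⊆ ℝ^{j+1}. Then N_j ∈ R(s,ρ,fine;j), i.e. N_j satisfies the fine strong j-dimensional approximation property with local ρ_y-uniformity (and hence, in particular, a set satisfying this Reifenberg property can have lower and upper Minkowski dimension strictly greater than j). -/
open Metric Set MeasureTheory ENNReal NNReal

attribute [local instance] Classical.propDecidable

noncomputable section

namespace ReifenbergPaper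

lemma comp_dist_le {n : ℕ} (z y : EuclideanSpace ℝ (Fin n)) (k : Fin n) :
    dist (z k) (y k) ≤ dist z y := by
  rw [EuclideanSpace.dist_eq]
  rw [show dist (z k) (y k) = Real.sqrt (dist (z k) (y k) ^ 2) from (Real.sqrt_sq dist_nonneg).symm]
  apply Real.sqrt_le_sqrt
  exact Finset.single_le_sum (f := fun i => dist (z i) (y i) ^ 2) (fun i _ => sq_nonneg _)
    (Finset.mem_univ k)

lemma recip_gap_lt {a b : ℕ} (ha : 1 ≤ a) (hab : a < b) :
    ((a:ℝ) * ((a:ℝ)+1))⁻¹ ≤ (a:ℝ)⁻¹ - (b:ℝ)⁻¹ := by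
  have ha' : (0:ℝ) < a := by exact_mod_cast ha
  have hb1 : ((a:ℝ)+1) ≤ (b:ℝ) := by exact_mod_cast hab
  have hb' : (0:ℝ) < b := by linarith
  have h1 : (b:ℝ)⁻¹ ≤ ((a:ℝ)+1)⁻¹ := inv_anti₀ (by positivity) hb1
  have h2 : (a:ℝ)⁻¹ - ((a:ℝ)+1)⁻¹ = ((a:ℝ) * ((a:ℝ)+1))⁻¹ := by
    rw [mul_inv]
    field_simp
    ring
  linarith

lemma recip_gap {i i' : ℕ} (hi : 1 ≤ i) (hi' : 1 ≤ i') (h : i ≠ i') :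
    ((i:ℝ) * ((i:ℝ)+1))⁻¹ ≤ |((i':ℝ))⁻¹ - ((i:ℝ))⁻¹| := by
  have hip : (0:ℝ) < i := by exact_mod_cast hi
  have hip' : (0:ℝ) < i' := by exact_mod_cast hi'
  have hp : (0:ℝ) < ((i:ℝ) * ((i:ℝ)+1))⁻¹ := by positivity
  have hp' : (0:ℝ) < ((i':ℝ) * ((i':ℝ)+1))⁻¹ := by positivity
  rcases lt_or_gt_of_ne h with hlt | hgt
  · have := recip_gap_lt hi hlt
    rw [abs_sub_comm, abs_of_nonneg (by linarith)]
    linarith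
  · have h1 := recip_gap_lt hi' hgt
    have h2 : ((i:ℝ) * ((i:ℝ)+1))⁻¹ ≤ ((i':ℝ) * ((i':ℝ)+1))⁻¹ := by
      apply inv_anti₀ (by positivity)
      have hle : (i':ℝ) ≤ (i:ℝ) := by exact_mod_cast hgt.le
      nlinarith
    rw [abs_of_nonneg (by linarith)]
    linarith

/-- `N_j = ⋃_{i≥1} {i⁻¹} × [0,1]^j ⊆ ℝ^{j+1}` satisfies the fine strong
`j`-dimensional approximation property with local `ρ_y`-uniformity. -/
theorem nset_fine_strong_rho (j : ℕ) (hj : 1 ≤ j) :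
    ∀ γ ∈ Set.Ioo (0:ℝ) 1, RsRho j γ (NSet j) := by
  intro γ hγ y hy
  obtain ⟨i, hi, hy0, -⟩ := hy
  have hipos : (0:ℝ) < i := by exact_mod_cast hi
  set g : ℝ := ((i:ℝ) * ((i:ℝ)+1))⁻¹ with hg
  have hgpos : 0 < g := by positivity
  -- any point of NSet within distance g/2 of y has first coordinate i⁻¹
  have key : ∀ w : EuclideanSpace ℝ (Fin (j+1)), w ∈ NSet j → dist w y ≤ g/2 →
      w 0 = ((i:ℝ))⁻¹ := by
    intro w hw hd
    obtain ⟨i', hi', hw0, -⟩ := hw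
    rcases eq_or_ne i' i with rfl | hne
    · exact hw0
    · exfalso
      have h1 : |((i':ℝ))⁻¹ - ((i:ℝ))⁻¹| ≤ g/2 := by
        rw [← hw0, ← hy0, ← Real.dist_eq]
        exact le_trans (comp_dist_le w y 0) hd
      have h2 := recip_gap hi hi' (Ne.symm hne)
      rw [← hg] at h2
      linarith
  refine ⟨g/4, by positivity, LinearMap.ker ((EuclideanSpace.proj (0 : Fin (j+1)) :
      EuclideanSpace ℝ (Fin (j+1)) →L[ℝ] ℝ) : EuclideanSpace ℝ (Fin (j+1)) →ₗ[ℝ] ℝ), ?_, ?_⟩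
  · have hs : Function.Surjective (EuclideanSpace.proj (0 : Fin (j+1)) :
        EuclideanSpace ℝ (Fin (j+1)) →L[ℝ] ℝ) := fun r => ⟨EuclideanSpace.single 0 r, by simp⟩
    have h := LinearMap.finrank_range_add_finrank_ker
      ((EuclideanSpace.proj (0 : Fin (j+1)) : EuclideanSpace ℝ (Fin (j+1)) →L[ℝ] ℝ) :
        EuclideanSpace ℝ (Fin (j+1)) →ₗ[ℝ] ℝ)
    rw [show LinearMap.range ((EuclideanSpace.proj (0 : Fin (j+1)) :
        EuclideanSpace ℝ (Fin (j+1)) →L[ℝ] ℝ) : EuclideanSpace ℝ (Fin (j+1)) →ₗ[ℝ] ℝ) = ⊤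
        from LinearMap.range_eq_top.mpr hs] at h
    have hk : LinearMap.ker ((EuclideanSpace.proj (0 : Fin (j+1)) :
        EuclideanSpace ℝ (Fin (j+1)) →L[ℝ] ℝ) : EuclideanSpace ℝ (Fin (j+1)) →ₗ[ℝ] ℝ) =
        LinearMap.ker ((EuclideanSpace.proj (0 : Fin (j+1)) :
        EuclideanSpace ℝ (Fin (j+1)) →L[ℝ] ℝ) : EuclideanSpace ℝ (Fin (j+1)) →ₗ[ℝ] ℝ) := rfl
    rw [hk] at h
    simp [finrank_euclideanSpace] at h
    omega
  · rintro x ⟨hxball, hxA⟩ ρ hρ z ⟨hzball, hzA⟩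
    rw [Metric.mem_closedBall] at hxball hzball
    have hx0 : x 0 = ((i:ℝ))⁻¹ := key x hxA (by linarith)
    have hz0 : z 0 = ((i:ℝ))⁻¹ := by
      apply key z hzA
      calc dist z y ≤ dist z x + dist x y := dist_triangle z x y
        _ ≤ ρ + g/4 := by linarith
        _ ≤ g/2 := by linarith [hρ.2]
    have hmem : z ∈ affPlane x (LinearMap.ker ((EuclideanSpace.proj (0 : Fin (j+1)) :
        EuclideanSpace ℝ (Fin (j+1)) →L[ℝ] ℝ) : EuclideanSpace ℝ (Fin (j+1)) →ₗ[ℝ] ℝ)) := by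
      simp only [affPlane, Set.mem_setOf_eq, LinearMap.mem_ker, ContinuousLinearMap.coe_coe, PiLp.proj_apply,
        PiLp.sub_apply, hx0, hz0, sub_self]
    have h0 : Metric.infDist z (affPlane x (LinearMap.ker ((EuclideanSpace.proj (0 : Fin (j+1)) :
        EuclideanSpace ℝ (Fin (j+1)) →L[ℝ] ℝ) : EuclideanSpace ℝ (Fin (j+1)) →ₗ[ℝ] ℝ))) ≤ 0 := by
      rw [← dist_self z]
      exact Metric.infDist_le_dist_of_mem hmem
    have hpos : (0:ℝ) ≤ γ * ρ := le_of_lt (mul_pos hγ.1 hρ.1)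
    show Metric.infDist z _ ≤ γ * ρ
    exact le_trans h0 hpos


end ReifenbergPaper
end
end
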